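/- arXiv:1407.0500 — 3 statements merged into one kernel-verified Lean document; each statement's English description precedes it below -/
import Mathlib

section
/- A snake graph with d ≥ 1 tiles has exactly two perfect matchings consisting only of boundary edges; these are called the minimal and maximal matchings. -/
/-!
Abstract snake graphs (Canakci–Schiffler, "Snake graph calculus II"), modelled
concretely on the unit square lattice in the plane.

A tile is a unit lattice square; a snake graph is a sequence of tiles, each
subsequent tile lying to the north or to the east of the previous one.
-/

/-- A lattice point in the plane. -/
abbrev Pt : Type := ℤ × ℤ

/-- An edge of the unit square lattice: a base point together with an orientation flag.
`(p, false)` is the horizontal edge from `p` to `p + (1,0)`;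
`(p, true)` is the vertical edge from `p` to `p + (0,1)`. -/
abbrev Edge : Type := Pt × Bool

namespace SnakeCalc

open scoped Classical

noncomputable section

/-- The two endpoints of a lattice edge. -/
def ends (e : Edge) : Finset Pt :=
  {e.1, if e.2 then (e.1.1, e.1.2 + 1) else (e.1.1 + 1, e.1.2)}

/-- Translation of an edge by a vector. -/
def tr (v : Pt) (e : Edge) : Edge := ((e.1.1 + v.1, e.1.2 + v.2), e.2)

/-- Difference of two lattice points. -/
def psub (p q : Pt) : Pt := (p.1 - q.1, p.2 - q.2)

/-- Rotation of an edge by 180 degrees; the rotation sends the unit square with corners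
`(0,0)` and `(1,1)` to the unit square with corners `c - (1,1)` and `c`. -/
def rot (c : Pt) (e : Edge) : Edge :=
  if e.2 then ((c.1 - e.1.1, c.2 - e.1.2 - 1), true)
  else ((c.1 - e.1.1 - 1, c.2 - e.1.2), false)

/-- South edge of the unit tile with southwest corner `p`. -/
def south (p : Pt) : Edge := (p, false)

/-- North edge of the unit tile with southwest corner `p`. -/
def north (p : Pt) : Edge := ((p.1, p.2 + 1), false)

/-- West edge of the unit tile with southwest corner `p`. -/
def west (p : Pt) : Edge := (p, true)

/-- East edge of the unit tile with southwest corner `p`. -/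
def east (p : Pt) : Edge := ((p.1 + 1, p.2), true)

/-- The canonical sign function on lattice edges (signs are booleans): on every unit tile
the north and west edges get the same sign, the south and east edges get the same sign,
and the north and south edges get opposite signs. -/
def canonSign (e : Edge) : Bool :=
  if e.2 then decide ¬((e.1.1 + e.1.2) % 2 = 0) else decide ((e.1.1 + e.1.2) % 2 = 0)

/-- An abstract snake graph with `n + 1 ≥ 1` tiles `G_0, …, G_n`.
`dir i` (for `i < n`) records whether tile `i+1` is glued to the north (`true`)
or to the east (`false`) of tile `i`; the values `dir i` for `i ≥ n` are irrelevant. -/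
structure SnakeGraph where
  n : ℕ
  dir : ℕ → Bool

namespace SnakeGraph

variable (G : SnakeGraph)

/-- The southwest corner of tile `i`. -/
def pos : ℕ → Pt
  | 0 => ((0 : ℤ), (0 : ℤ))
  | i + 1 =>
      if G.dir i then ((pos i).1, (pos i).2 + 1) else ((pos i).1 + 1, (pos i).2)

/-- The four edges of the unit tile with southwest corner `p`. -/
def tileEdges (p : Pt) : Finset Edge := {south p, north p, west p, east p}

/-- The four vertices of the unit tile with southwest corner `p`. -/
def tileVertices (p : Pt) : Finset Pt :=
  {p, (p.1 + 1, p.2), (p.1, p.2 + 1), (p.1 + 1, p.2 + 1)}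

/-- The edge set of the snake graph. -/
def edges : Finset Edge := (Finset.range (G.n + 1)).biUnion fun i => tileEdges (G.pos i)

/-- The vertex set of the snake graph. -/
def vertices : Finset Pt := (Finset.range (G.n + 1)).biUnion fun i => tileVertices (G.pos i)

/-- The interior edge `e_i` shared by the tiles `i` and `i+1` (meaningful for `i < n`). -/
def ie (i : ℕ) : Edge := if G.dir i then north (G.pos i) else east (G.pos i)

/-- The set of interior edges of the snake graph. -/
def interiorEdges : Finset Edge := (Finset.range G.n).image fun i => G.ie i

/-- An edge of `G` which is not an interior edge is a boundary edge. -/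
def IsBoundaryEdge (e : Edge) : Prop := e ∈ G.edges ∧ e ∉ G.interiorEdges

/-- The edges of the tiles `a, a+1, …, b` of `G` (in place). -/
def segEdges (a b : ℕ) : Finset Edge :=
  (Finset.Icc a b).biUnion fun i => tileEdges (G.pos i)

/-- The interior edges of the segment of tiles `a, …, b` of `G`. -/
def segInterior (a b : ℕ) : Finset Edge := (Finset.Ico a b).image fun i => G.ie i

/-- The boundary edges of the segment of tiles `a, …, b` of `G`
(the boundary cycle of the union of these tiles). -/
def segBoundary (a b : ℕ) : Finset Edge := G.segEdges a b \ G.segInterior a b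

/-- `f` is a sign function on `G`: on every tile of `G` the north and the west edge have the
same sign, the south and the east edge have the same sign, and the sign on the north edge is
opposite to the sign on the south edge. -/
def IsSignFunction (f : Edge → Bool) : Prop :=
  ∀ i ≤ G.n,
    f (north (G.pos i)) = f (west (G.pos i)) ∧
    f (south (G.pos i)) = f (east (G.pos i)) ∧
    f (north (G.pos i)) = ! f (south (G.pos i))

/-- `e` is a north edge or an east edge of some tile of `G`. -/
def IsNE (e : Edge) : Prop := ∃ i ≤ G.n, e = north (G.pos i) ∨ e = east (G.pos i)

/-- `e` is a south edge or a west edge of some tile of `G`. -/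
def IsSW (e : Edge) : Prop := ∃ i ≤ G.n, e = south (G.pos i) ∨ e = west (G.pos i)

/-- `P` is a perfect matching of `G`: a set of edges of `G` such that every vertex of `G` is
incident to exactly one edge of `P`. -/
def IsPerfectMatching (P : Finset Edge) : Prop :=
  P ⊆ G.edges ∧ ∀ v ∈ G.vertices, (P.filter fun e => v ∈ ends e).card = 1

/-- The type of perfect matchings of `G`. -/
def Matchings := { P : Finset Edge // G.IsPerfectMatching P }

/-- The segment of tiles `a, …, b` of `G`, as a standalone snake graph (based at the origin). -/
def segment (a b : ℕ) : SnakeGraph := ⟨b - a, fun k => G.dir (a + k)⟩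

/-- The reversed segment of tiles `b, b-1, …, a` of `G`, as a standalone snake graph. -/
def revSegment (a b : ℕ) : SnakeGraph := ⟨b - a, fun k => G.dir (b - 1 - k)⟩

end SnakeGraph

/-- Concatenation of two snake graphs, the first tile of `K` being glued to the last tile
of `H` in direction `d` (`true` = north, `false` = east). -/
def concat (H K : SnakeGraph) (d : Bool) : SnakeGraph :=
  ⟨H.n + 1 + K.n, fun k => if k < H.n then H.dir k else if k = H.n then d else K.dir (k - H.n - 1)⟩

/-- A possibly degenerate snake graph: the zero element, a single edge, or an honest
snake graph. -/
inductive SnakeObj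
  | zero
  | edge
  | graph (G : SnakeGraph)

/-- Perfect matchings of a possibly degenerate snake graph: the zero object has none, the
single edge has exactly one, and a snake graph has its usual perfect matchings. -/
def SnakeObj.Matchings : SnakeObj → Type
  | .zero => Empty
  | .edge => PUnit
  | .graph G => G.Matchings

/-- `G ∖ pred(e)`, where `e` is the first edge among the interior edges `e_j` (`j ≥ a`) of `G`
together with the north-east edges of the last tile whose sign agrees with the sign of the
reference edge `r`: remove all predecessors of `e`.  If no interior edge qualifies, `e` is a
north-east edge of the last tile and the result is a single edge. -/
def SnakeGraph.cutPredFrom (G : SnakeGraph) (a : ℕ) (r : Edge) : SnakeObj :=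
  if h : ∃ j, a ≤ j ∧ j < G.n ∧ canonSign (G.ie j) = canonSign r then
    .graph ⟨G.n - (Nat.find h + 1), fun k => G.dir (Nat.find h + 1 + k)⟩
  else .edge

/-- `G ∖ succ(e)`, where `e` is the last edge among the south-west edges of the first tile
together with the interior edges of `G` whose sign agrees with the sign of `r`. -/
def SnakeGraph.cutSuccAt (G : SnakeGraph) (r : Edge) : SnakeObj :=
  if _ : ∃ j, j < G.n ∧ canonSign (G.ie j) = canonSign r then
    .graph ⟨Nat.findGreatest (fun j => j < G.n ∧ canonSign (G.ie j) = canonSign r) G.n, G.dir⟩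
  else .edge

/-- `G ∖ pred(e) ∖ succ(e')`, where `e` is the first edge with sign equal to that of `r` and
`e'` is the last edge with sign equal to that of `r'` (both among interior edges, with the
degenerate conventions of the paper); the result may be zero. -/
def SnakeGraph.cutBothAt (G : SnakeGraph) (r r' : Edge) : SnakeObj :=
  if h : ∃ j, j < G.n ∧ canonSign (G.ie j) = canonSign r then
    if _ : ∃ j, j < G.n ∧ canonSign (G.ie j) = canonSign r' then
      let j₁ := Nat.find h
      let j₂ := Nat.findGreatest (fun j => j < G.n ∧ canonSign (G.ie j) = canonSign r') G.n
      if j₁ < j₂ then .graph ⟨j₂ - (j₁ + 1), fun k => G.dir (j₁ + 1 + k)⟩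
      else if j₁ = j₂ then .edge
      else .zero
    else .zero
  else .zero

end

end SnakeCalc
namespace SnakeCalc
namespace SnakeGraph

noncomputable def cnt (v : Pt) (S : Finset Edge) : ℕ :=
  (S.filter fun e => v ∈ ends e).card

lemma pm_iff (G : SnakeGraph) (P : Finset Edge) :
    G.IsPerfectMatching P ↔ P ⊆ G.edges ∧ ∀ v ∈ G.vertices, cnt v P = 1 := Iff.rfl

lemma cnt_insert (v : Pt) (e : Edge) (S : Finset Edge) (h : e ∉ S) :
    cnt v (insert e S) = (if v ∈ ends e then 1 else 0) + cnt v S := by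
  unfold cnt
  rw [Finset.filter_insert]
  split
  · rw [Finset.card_insert_of_notMem (by simp [h])]; omega
  · simp

lemma cnt_zero_of (v : Pt) (S : Finset Edge) (hv : ∀ e ∈ S, v ∉ ends e) : cnt v S = 0 := by
  unfold cnt
  rw [Finset.card_eq_zero, Finset.filter_eq_empty_iff]
  exact hv

lemma interior_subset (G : SnakeGraph) : G.interiorEdges ⊆ G.edges := by
  intro e he
  simp only [interiorEdges, Finset.mem_image, Finset.mem_range] at he
  obtain ⟨i, hi, rfl⟩ := he
  simp only [edges, Finset.mem_biUnion, Finset.mem_range]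
  exact ⟨i, by omega, by unfold ie; split <;> simp [tileEdges]⟩

lemma ends_subset (G : SnakeGraph) {e : Edge} (he : e ∈ G.edges) :
    ∀ v ∈ ends e, v ∈ G.vertices := by
  intro v hv
  simp only [edges, Finset.mem_biUnion, Finset.mem_range] at he
  obtain ⟨i, hi, hcase⟩ := he
  simp only [vertices, Finset.mem_biUnion, Finset.mem_range]
  refine ⟨i, hi, ?_⟩
  simp only [tileEdges, Finset.mem_insert, Finset.mem_singleton] at hcase
  rcases hcase with h|h|h|h <;> subst h <;>
    simp only [ends, south, north, west, east, tileVertices,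
      Finset.mem_insert, Finset.mem_singleton] at hv ⊢ <;>
    rcases hv with h|h <;> simp_all <;> tauto

end SnakeGraph
end SnakeCalc
namespace SnakeCalc
namespace SnakeGraph

/-- The target property: exactly two boundary matchings. -/
def TwoBM (G : SnakeGraph) : Prop :=
  ∃ P₁ P₂ : Finset Edge, P₁ ≠ P₂ ∧
    (G.IsPerfectMatching P₁ ∧ ∀ e ∈ P₁, e ∉ G.interiorEdges) ∧
    (G.IsPerfectMatching P₂ ∧ ∀ e ∈ P₂, e ∉ G.interiorEdges) ∧
    ∀ P : Finset Edge, G.IsPerfectMatching P → (∀ e ∈ P, e ∉ G.interiorEdges) →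
      P = P₁ ∨ P = P₂

set_option maxHeartbeats 2000000 in
lemma step (G G' : SnakeGraph)
    (i0 s₁ s₂ f : Edge) (u₁ u₂ a b : Pt)
    (hE : G.edges = G'.edges ∪ {s₁, s₂, f})
    (hI : G.interiorEdges = insert i0 G'.interiorEdges)
    (hV : G.vertices = G'.vertices ∪ {u₁, u₂})
    (hs₁ : s₁ ∉ G'.edges) (hs₂ : s₂ ∉ G'.edges) (hf : f ∉ G'.edges)
    (hi0 : i0 ∈ G'.edges) (hi0' : i0 ∉ G'.interiorEdges)
    (hu₁ : u₁ ∉ G'.vertices) (hu₂ : u₂ ∉ G'.vertices) (huu : u₁ ≠ u₂)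
    (ha : a ∈ G'.vertices) (hb : b ∈ G'.vertices) (hab : a ≠ b)
    (ei0 : ends i0 = {a, b}) (es₁ : ends s₁ = {a, u₁}) (es₂ : ends s₂ = {b, u₂})
    (ef : ends f = {u₁, u₂})
    (H : TwoBM G') : TwoBM G := by
  -- basic distinctness facts
  have hau₁ : a ≠ u₁ := fun h => hu₁ (h ▸ ha)
  have hau₂ : a ≠ u₂ := fun h => hu₂ (h ▸ ha)
  have hbu₁ : b ≠ u₁ := fun h => hu₁ (h ▸ hb)
  have hbu₂ : b ≠ u₂ := fun h => hu₂ (h ▸ hb)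
  have hs₁s₂ : s₁ ≠ s₂ := by
    intro h
    have : a ∈ ends s₂ := by rw [← h, es₁]; simp
    rw [es₂] at this
    simp only [Finset.mem_insert, Finset.mem_singleton] at this
    tauto
  have hs₁f : s₁ ≠ f := by
    intro h
    have : a ∈ ends f := by rw [← h, es₁]; simp
    rw [ef] at this
    simp only [Finset.mem_insert, Finset.mem_singleton] at this
    tauto
  have hs₂f : s₂ ≠ f := by
    intro h
    have : b ∈ ends f := by rw [← h, es₂]; simp
    rw [ef] at this
    simp only [Finset.mem_insert, Finset.mem_singleton] at this
    tauto
  have hi0s₁ : i0 ≠ s₁ := fun h => hs₁ (h ▸ hi0)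
  have hi0s₂ : i0 ≠ s₂ := fun h => hs₂ (h ▸ hi0)
  have hi0f : i0 ≠ f := fun h => hf (h ▸ hi0)
  -- the extension map
  set F : Finset Edge → Finset Edge :=
    fun Q => if i0 ∈ Q then insert s₁ (insert s₂ (Q.erase i0)) else insert f Q with hFdef
  have Fpos : ∀ Q : Finset Edge, i0 ∈ Q → F Q = insert s₁ (insert s₂ (Q.erase i0)) := by
    intro Q h; rw [hFdef]; exact if_pos h
  have Fneg : ∀ Q : Finset Edge, i0 ∉ Q → F Q = insert f Q := by
    intro Q h; rw [hFdef]; exact if_neg h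
  -- claim A: F sends boundary matchings of G' to boundary matchings of G
  have KA : ∀ Q : Finset Edge, Q ⊆ G'.edges → (∀ v ∈ G'.vertices, cnt v Q = 1) →
      (∀ e ∈ Q, e ∉ G'.interiorEdges) →
      (F Q ⊆ G.edges ∧ (∀ v ∈ G.vertices, cnt v (F Q) = 1) ∧
        ∀ e ∈ F Q, e ∉ G.interiorEdges) := by
    intro Q hsub hcnt hbd
    have hs₁Q : s₁ ∉ Q := fun h => hs₁ (hsub h)
    have hs₂Q : s₂ ∉ Q := fun h => hs₂ (hsub h)
    have hfQ : f ∉ Q := fun h => hf (hsub h)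
    have hendsQ : ∀ e ∈ Q, ∀ v ∈ ends e, v ∈ G'.vertices :=
      fun e he => ends_subset G' (hsub he)
    by_cases hQ : i0 ∈ Q
    · have hFQ := Fpos Q hQ
      have hs₂e : s₂ ∉ Q.erase i0 := fun h => hs₂Q (Finset.mem_of_mem_erase h)
      have hs₁e : s₁ ∉ insert s₂ (Q.erase i0) := by
        simp only [Finset.mem_insert]
        rintro (h | h)
        · exact hs₁s₂ h
        · exact hs₁Q (Finset.mem_of_mem_erase h)
      have hQcnt : ∀ w ∈ G'.vertices,
          (if w ∈ ends i0 then 1 else 0) + cnt w (Q.erase i0) = 1 := by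
        intro w hw
        rw [← cnt_insert w i0 (Q.erase i0) (Finset.notMem_erase _ _),
          Finset.insert_erase hQ]
        exact hcnt w hw
      refine ⟨?_, ?_, ?_⟩
      · rw [hFQ]
        intro e he
        rw [hE]
        simp only [Finset.mem_insert, Finset.mem_union, Finset.mem_singleton] at he ⊢
        rcases he with rfl | rfl | he
        · tauto
        · tauto
        · exact Or.inl (hsub (Finset.mem_of_mem_erase he))
      · intro v hv
        rw [hFQ, cnt_insert v s₁ _ hs₁e, cnt_insert v s₂ _ hs₂e, es₁, es₂]
        rw [hV] at hv
        simp only [Finset.mem_union, Finset.mem_insert, Finset.mem_singleton] at hv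
        rcases hv with hv | hv1 | hv2
        · have h2 := hQcnt v hv
          rw [ei0] at h2
          have hvu₁ : v ≠ u₁ := fun h => hu₁ (h ▸ hv)
          have hvu₂ : v ≠ u₂ := fun h => hu₂ (h ▸ hv)
          simp only [Finset.mem_insert, Finset.mem_singleton] at h2 ⊢
          by_cases hva : v = a
          · subst hva
            rw [if_pos (Or.inl rfl)] at h2
            rw [if_pos (Or.inl rfl), if_neg (by simp [hab, hau₂])]
            omega
          · by_cases hvb : v = b
            · subst hvb
              rw [if_pos (Or.inr rfl)] at h2
              rw [if_neg (by simp [hva, hbu₁]), if_pos (Or.inl rfl)]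
              omega
            · rw [if_neg (by simp [hva, hvb])] at h2
              rw [if_neg (by simp [hva, hvu₁]), if_neg (by simp [hvb, hvu₂])]
              omega
        · subst hv1
          have h0 : cnt v (Q.erase i0) = 0 := by
            apply cnt_zero_of
            intro e he hu
            exact hu₁ (hendsQ e (Finset.mem_of_mem_erase he) _ hu)
          simp [h0, Ne.symm hbu₁, huu]
        · subst hv2
          have h0 : cnt v (Q.erase i0) = 0 := by
            apply cnt_zero_of
            intro e he hu
            exact hu₂ (hendsQ e (Finset.mem_of_mem_erase he) _ hu)
          simp [h0, Ne.symm hau₂, Ne.symm huu]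
      · rw [hFQ]
        intro e he
        rw [hI]
        simp only [Finset.mem_insert, Finset.mem_singleton] at he ⊢
        rintro (rfl | hin)
        · rcases he with rfl | rfl | he
          · exact hi0s₁ rfl
          · exact hi0s₂ rfl
          · exact (Finset.mem_erase.mp he).1 rfl
        · rcases he with rfl | rfl | he
          · exact hs₁ (interior_subset G' hin)
          · exact hs₂ (interior_subset G' hin)
          · exact hbd e (Finset.mem_of_mem_erase he) hin
    · have hFQ := Fneg Q hQ
      refine ⟨?_, ?_, ?_⟩
      · rw [hFQ]
        intro e he
        rw [hE]
        simp only [Finset.mem_insert, Finset.mem_union, Finset.mem_singleton] at he ⊢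
        rcases he with rfl | he
        · tauto
        · exact Or.inl (hsub he)
      · intro v hv
        rw [hFQ, cnt_insert v f Q hfQ, ef]
        rw [hV] at hv
        simp only [Finset.mem_union, Finset.mem_insert, Finset.mem_singleton] at hv
        rcases hv with hv | hv1 | hv2
        · have hvu₁ : v ≠ u₁ := fun h => hu₁ (h ▸ hv)
          have hvu₂ : v ≠ u₂ := fun h => hu₂ (h ▸ hv)
          simp only [Finset.mem_insert, Finset.mem_singleton]
          rw [if_neg (by simp [hvu₁, hvu₂])]
          rw [hcnt v hv]
        · subst hv1
          have h0 : cnt v Q = 0 := by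
            apply cnt_zero_of
            intro e he hu
            exact hu₁ (hendsQ e he _ hu)
          simp [h0]
        · subst hv2
          have h0 : cnt v Q = 0 := by
            apply cnt_zero_of
            intro e he hu
            exact hu₂ (hendsQ e he _ hu)
          simp [h0]
      · rw [hFQ]
        intro e he
        rw [hI]
        simp only [Finset.mem_insert, Finset.mem_singleton] at he ⊢
        rintro (rfl | hin)
        · rcases he with rfl | he
          · exact hi0f rfl
          · exact hQ he
        · rcases he with rfl | he
          · exact hf (interior_subset G' hin)
          · exact hbd e he hin
  -- claim B: every boundary matching of G is of the form F Q
  have KB : ∀ P : Finset Edge, P ⊆ G.edges → (∀ v ∈ G.vertices, cnt v P = 1) →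
      (∀ e ∈ P, e ∉ G.interiorEdges) →
      ∃ Q : Finset Edge, (Q ⊆ G'.edges ∧ (∀ v ∈ G'.vertices, cnt v Q = 1) ∧
        (∀ e ∈ Q, e ∉ G'.interiorEdges)) ∧ F Q = P := by
    intro P hsub hcnt hbd
    have hi0P : i0 ∉ P := fun h => hbd i0 h (by rw [hI]; exact Finset.mem_insert_self _ _)
    have hVsub : G'.vertices ⊆ G.vertices := by rw [hV]; exact Finset.subset_union_left
    have hu₁V : u₁ ∈ G.vertices := by rw [hV]; simp
    have hu₂V : u₂ ∈ G.vertices := by rw [hV]; simp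
    have hmemE : ∀ e ∈ P, e ∈ G'.edges ∨ e = s₁ ∨ e = s₂ ∨ e = f := by
      intro e he
      have h := hsub he
      rw [hE] at h
      simp only [Finset.mem_union, Finset.mem_insert, Finset.mem_singleton] at h
      tauto
    have hedge_u₁ : ∀ e ∈ P, u₁ ∈ ends e → e = s₁ ∨ e = f := by
      intro e he hu
      rcases hmemE e he with h | rfl | rfl | rfl
      · exact absurd (ends_subset G' h u₁ hu) hu₁
      · exact Or.inl rfl
      · rw [es₂] at hu
        simp only [Finset.mem_insert, Finset.mem_singleton] at hu
        rcases hu with h | h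
        · exact (hbu₁ h.symm).elim
        · exact (huu h).elim
      · exact Or.inr rfl
    have hedge_u₂ : ∀ e ∈ P, u₂ ∈ ends e → e = s₂ ∨ e = f := by
      intro e he hu
      rcases hmemE e he with h | rfl | rfl | rfl
      · exact absurd (ends_subset G' h u₂ hu) hu₂
      · rw [es₁] at hu
        simp only [Finset.mem_insert, Finset.mem_singleton] at hu
        rcases hu with h | h
        · exact (hau₂ h.symm).elim
        · exact (huu h.symm).elim
      · exact Or.inl rfl
      · exact Or.inr rfl
    by_cases hfP : f ∈ P
    · -- f covers both new vertices; s₁, s₂ ∉ P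
      have hs₁P : s₁ ∉ P := by
        intro h
        have hpair : ({s₁, f} : Finset Edge) ⊆ P.filter (fun e => u₁ ∈ ends e) := by
          intro e he
          simp only [Finset.mem_insert, Finset.mem_singleton] at he
          rcases he with rfl | rfl
          · exact Finset.mem_filter.mpr ⟨h, by rw [es₁]; simp⟩
          · exact Finset.mem_filter.mpr ⟨hfP, by rw [ef]; simp⟩
        have h2 : ({s₁, f} : Finset Edge).card = 2 := by
          rw [Finset.card_insert_of_notMem (by simp [hs₁f]), Finset.card_singleton]
        have h3 := Finset.card_le_card hpair
        have h1 := hcnt u₁ hu₁V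
        unfold cnt at h1
        omega
      have hs₂P : s₂ ∉ P := by
        intro h
        have hpair : ({s₂, f} : Finset Edge) ⊆ P.filter (fun e => u₂ ∈ ends e) := by
          intro e he
          simp only [Finset.mem_insert, Finset.mem_singleton] at he
          rcases he with rfl | rfl
          · exact Finset.mem_filter.mpr ⟨h, by rw [es₂]; simp⟩
          · exact Finset.mem_filter.mpr ⟨hfP, by rw [ef]; simp⟩
        have h2 : ({s₂, f} : Finset Edge).card = 2 := by
          rw [Finset.card_insert_of_notMem (by simp [hs₂f]), Finset.card_singleton]
        have h3 := Finset.card_le_card hpair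
        have h1 := hcnt u₂ hu₂V
        unfold cnt at h1
        omega
      refine ⟨P.erase f, ⟨?_, ?_, ?_⟩, ?_⟩
      · intro e he
        have heP := Finset.mem_of_mem_erase he
        have hef := (Finset.mem_erase.mp he).1
        rcases hmemE e heP with h | rfl | rfl | rfl
        · exact h
        · exact absurd heP hs₁P
        · exact absurd heP hs₂P
        · exact absurd rfl hef
      · intro v hv
        have hvu₁ : v ≠ u₁ := fun h => hu₁ (h ▸ hv)
        have hvu₂ : v ≠ u₂ := fun h => hu₂ (h ▸ hv)
        have h1 := hcnt v (hVsub hv)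
        rw [← Finset.insert_erase hfP,
          cnt_insert v f _ (Finset.notMem_erase _ _), ef] at h1
        rw [if_neg (by simp [hvu₁, hvu₂])] at h1
        omega
      · intro e he hin
        exact hbd e (Finset.mem_of_mem_erase he)
          (by rw [hI]; exact Finset.mem_insert_of_mem hin)
      · have hni : i0 ∉ P.erase f := fun h => hi0P (Finset.mem_of_mem_erase h)
        rw [Fneg _ hni, Finset.insert_erase hfP]
    · -- s₁ and s₂ are in P
      have hs₁P : s₁ ∈ P := by
        have h1 := hcnt u₁ hu₁V
        unfold cnt at h1
        obtain ⟨e, hee⟩ := Finset.card_eq_one.mp h1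
        have he : e ∈ P.filter (fun e => u₁ ∈ ends e) := by rw [hee]; simp
        rw [Finset.mem_filter] at he
        rcases hedge_u₁ e he.1 he.2 with rfl | rfl
        · exact he.1
        · exact absurd he.1 hfP
      have hs₂P : s₂ ∈ P := by
        have h1 := hcnt u₂ hu₂V
        unfold cnt at h1
        obtain ⟨e, hee⟩ := Finset.card_eq_one.mp h1
        have he : e ∈ P.filter (fun e => u₂ ∈ ends e) := by rw [hee]; simp
        rw [Finset.mem_filter] at he
        rcases hedge_u₂ e he.1 he.2 with rfl | rfl
        · exact he.1
        · exact absurd he.1 hfP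
      set P0 := (P.erase s₁).erase s₂ with hP0
      have hs₂P1 : s₂ ∈ P.erase s₁ := Finset.mem_erase.mpr ⟨Ne.symm hs₁s₂, hs₂P⟩
      have hins2 : insert s₂ P0 = P.erase s₁ := Finset.insert_erase hs₂P1
      have hins1 : insert s₁ (P.erase s₁) = P := Finset.insert_erase hs₁P
      have hi0P0 : i0 ∉ P0 :=
        fun h => hi0P (Finset.mem_of_mem_erase (Finset.mem_of_mem_erase h))
      have hs₂P0 : s₂ ∉ P0 := Finset.notMem_erase _ _
      have hs₁P0' : s₁ ∉ insert s₂ P0 := by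
        rw [hins2]
        exact Finset.notMem_erase _ _
      have hfP0 : f ∉ P0 :=
        fun h => hfP (Finset.mem_of_mem_erase (Finset.mem_of_mem_erase h))
      have hcntP : ∀ v : Pt, cnt v P =
          (if v ∈ ends s₁ then 1 else 0) + ((if v ∈ ends s₂ then 1 else 0) + cnt v P0) := by
        intro v
        conv_lhs => rw [← hins1, ← hins2]
        rw [cnt_insert v s₁ _ hs₁P0', cnt_insert v s₂ _ hs₂P0]
      refine ⟨insert i0 P0, ⟨?_, ?_, ?_⟩, ?_⟩
      · intro e he
        rcases Finset.mem_insert.mp he with rfl | he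
        · exact hi0
        · have heP : e ∈ P := Finset.mem_of_mem_erase (Finset.mem_of_mem_erase he)
          rcases hmemE e heP with h | rfl | rfl | rfl
          · exact h
          · exact absurd he (by rw [hP0]; exact fun h' =>
              (Finset.mem_erase.mp (Finset.mem_of_mem_erase h')).1 rfl)
          · exact absurd he hs₂P0
          · exact absurd heP hfP
      · intro v hv
        have hvu₁ : v ≠ u₁ := fun h => hu₁ (h ▸ hv)
        have hvu₂ : v ≠ u₂ := fun h => hu₂ (h ▸ hv)
        rw [cnt_insert v i0 P0 hi0P0, ei0]
        have h2 := hcnt v (hVsub hv)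
        rw [hcntP v, es₁, es₂] at h2
        simp only [Finset.mem_insert, Finset.mem_singleton] at h2 ⊢
        by_cases hva : v = a
        · subst hva
          rw [if_pos (Or.inl rfl), if_neg (by simp [hab, hau₂])] at h2
          rw [if_pos (Or.inl rfl)]
          omega
        · by_cases hvb : v = b
          · subst hvb
            rw [if_neg (by simp [hva, hbu₁]), if_pos (Or.inl rfl)] at h2
            rw [if_pos (Or.inr rfl)]
            omega
          · rw [if_neg (by simp [hva, hvu₁]), if_neg (by simp [hvb, hvu₂])] at h2
            rw [if_neg (by simp [hva, hvb])]
            omega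
      · intro e he hin
        rcases Finset.mem_insert.mp he with rfl | he
        · exact hi0' hin
        · exact hbd e (Finset.mem_of_mem_erase (Finset.mem_of_mem_erase he))
            (by rw [hI]; exact Finset.mem_insert_of_mem hin)
      · rw [Fpos _ (Finset.mem_insert_self _ _), Finset.erase_insert hi0P0, hins2, hins1]
  -- injectivity of F on subsets of the edges of G'
  have Ks₁ : ∀ Q : Finset Edge, Q ⊆ G'.edges → (s₁ ∈ F Q ↔ i0 ∈ Q) := by
    intro Q hsub
    have hs₁Q : s₁ ∉ Q := fun h => hs₁ (hsub h)
    by_cases hQ : i0 ∈ Q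
    · rw [Fpos Q hQ]
      simp [hQ]
    · rw [Fneg Q hQ]
      simp [hQ, hs₁f, hs₁Q]
  have Kmem : ∀ Q : Finset Edge, Q ⊆ G'.edges → ∀ g ∈ G'.edges, g ≠ i0 →
      (g ∈ F Q ↔ g ∈ Q) := by
    intro Q hsub g hg hgi
    have hgs₁ : g ≠ s₁ := fun h => hs₁ (h ▸ hg)
    have hgs₂ : g ≠ s₂ := fun h => hs₂ (h ▸ hg)
    have hgf : g ≠ f := fun h => hf (h ▸ hg)
    by_cases hQ : i0 ∈ Q
    · rw [Fpos Q hQ]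
      simp [hgs₁, hgs₂, Finset.mem_erase, hgi]
    · rw [Fneg Q hQ]
      simp [hgf]
  have Kinj : ∀ Q₁ Q₂ : Finset Edge, Q₁ ⊆ G'.edges → Q₂ ⊆ G'.edges →
      F Q₁ = F Q₂ → Q₁ = Q₂ := by
    intro Q₁ Q₂ h1 h2 hFF
    ext g
    by_cases hg : g ∈ G'.edges
    · by_cases hgi : g = i0
      · subst hgi
        rw [← Ks₁ Q₁ h1, ← Ks₁ Q₂ h2, hFF]
      · rw [← Kmem Q₁ h1 g hg hgi, ← Kmem Q₂ h2 g hg hgi, hFF]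
    · constructor <;> intro h
      · exact absurd (h1 h) hg
      · exact absurd (h2 h) hg
  -- assemble
  obtain ⟨Q₁, Q₂, hne, ⟨hpm1, hb1⟩, ⟨hpm2, hb2⟩, hun⟩ := H
  rw [pm_iff] at hpm1 hpm2
  obtain ⟨h1s, h1c⟩ := hpm1
  obtain ⟨h2s, h2c⟩ := hpm2
  obtain ⟨hA1, hA1c, hA1b⟩ := KA Q₁ h1s h1c hb1
  obtain ⟨hA2, hA2c, hA2b⟩ := KA Q₂ h2s h2c hb2
  refine ⟨F Q₁, F Q₂, ?_, ⟨(pm_iff _ _).mpr ⟨hA1, hA1c⟩, hA1b⟩,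
    ⟨(pm_iff _ _).mpr ⟨hA2, hA2c⟩, hA2b⟩, ?_⟩
  · intro h
    exact hne (Kinj Q₁ Q₂ h1s h2s h)
  · intro P hpm hbdP
    rw [pm_iff] at hpm
    obtain ⟨Q, ⟨hQs, hQc, hQb⟩, hFQ⟩ := KB P hpm.1 hpm.2 hbdP
    rcases hun Q ((pm_iff _ _).mpr ⟨hQs, hQc⟩) hQb with h | h
    · subst h
      exact Or.inl hFQ.symm
    · subst h
      exact Or.inr hFQ.symm

end SnakeGraph
end SnakeCalc
namespace SnakeCalc
namespace SnakeGraph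

lemma possum (G : SnakeGraph) : ∀ i, (G.pos i).1 + (G.pos i).2 = i := by
  intro i
  induction i with
  | zero => simp [pos]
  | succ k ih => by_cases h : G.dir k <;> simp [pos, h] <;> omega

lemma pos_mk (n n' : ℕ) (d : ℕ → Bool) : ∀ i,
    ((⟨n, d⟩ : SnakeGraph)).pos i = ((⟨n', d⟩ : SnakeGraph)).pos i := by
  intro i
  induction i with
  | zero => rfl
  | succ k ih => simp only [pos, ih]

lemma pos_mono (G : SnakeGraph) {i j : ℕ} (h : i ≤ j) :
    (G.pos i).1 ≤ (G.pos j).1 ∧ (G.pos i).2 ≤ (G.pos j).2 := by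
  induction j with
  | zero => simp_all
  | succ k ih =>
      by_cases hik : i ≤ k
      · have h2 := ih hik
        by_cases hdk : G.dir k <;> simp [pos, hdk] <;> omega
      · have : i = k + 1 := by omega
        subst this
        exact ⟨le_refl _, le_refl _⟩

lemma notmem_edges (G : SnakeGraph) (e : Edge)
    (h : ∀ j ≤ G.n, e ∉ tileEdges (G.pos j)) :
    e ∉ G.edges := by
  intro he
  simp only [edges, Finset.mem_biUnion, Finset.mem_range, Nat.lt_succ_iff] at he
  obtain ⟨j, hj, hmem⟩ := he
  exact h j hj hmem

lemma notmem_vertices (G : SnakeGraph) (v : Pt)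
    (h : ∀ j ≤ G.n, v ∉ tileVertices (G.pos j)) :
    v ∉ G.vertices := by
  intro hv
  simp only [vertices, Finset.mem_biUnion, Finset.mem_range, Nat.lt_succ_iff] at hv
  obtain ⟨j, hj, hmem⟩ := hv
  exact h j hj hmem

end SnakeGraph
end SnakeCalc
namespace SnakeCalc
namespace SnakeGraph

lemma edges0 (d : ℕ → Bool) :
    (⟨0, d⟩ : SnakeGraph).edges =
      ({(((0:ℤ),(0:ℤ)),false), (((0:ℤ),(1:ℤ)),false), (((0:ℤ),(0:ℤ)),true),
        (((1:ℤ),(0:ℤ)),true)} : Finset Edge) := by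
  simp [edges, tileEdges, pos, south, north, west, east]

lemma vertices0 (d : ℕ → Bool) :
    (⟨0, d⟩ : SnakeGraph).vertices =
      ({((0:ℤ),(0:ℤ)), ((1:ℤ),(0:ℤ)), ((0:ℤ),(1:ℤ)), ((1:ℤ),(1:ℤ))} : Finset Pt) := by
  simp [vertices, tileVertices, pos]

lemma interior0 (d : ℕ → Bool) : (⟨0, d⟩ : SnakeGraph).interiorEdges = ∅ := by
  simp [interiorEdges]

lemma base (d : ℕ → Bool) : TwoBM (⟨0, d⟩ : SnakeGraph) := by
  refine ⟨{(((0:ℤ),(0:ℤ)),false), (((0:ℤ),(1:ℤ)),false)},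
          {(((0:ℤ),(0:ℤ)),true), (((1:ℤ),(0:ℤ)),true)}, ?_, ⟨?_, ?_⟩, ⟨?_, ?_⟩, ?_⟩
  · decide
  · rw [IsPerfectMatching, edges0, vertices0]
    exact ⟨by decide, by decide⟩
  · rw [interior0]
    simp
  · rw [IsPerfectMatching, edges0, vertices0]
    exact ⟨by decide, by decide⟩
  · rw [interior0]
    simp
  · intro P hP _
    rw [IsPerfectMatching, edges0, vertices0] at hP
    obtain ⟨hsub, hcnt⟩ := hP
    have hp : P ∈ ({(((0:ℤ),(0:ℤ)),false), (((0:ℤ),(1:ℤ)),false), (((0:ℤ),(0:ℤ)),true),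
        (((1:ℤ),(0:ℤ)),true)} : Finset Edge).powerset := Finset.mem_powerset.mpr hsub
    fin_cases hp <;> revert hcnt <;> decide

lemma ie_mk (n n' : ℕ) (d : ℕ → Bool) (j : ℕ) :
    (⟨n, d⟩ : SnakeGraph).ie j = (⟨n', d⟩ : SnakeGraph).ie j := by
  simp [ie, pos_mk n n' d j]

set_option maxHeartbeats 2000000 in
lemma stepGeom (m : ℕ) (d : ℕ → Bool) (IH : TwoBM (⟨m, d⟩ : SnakeGraph)) :
    TwoBM (⟨m + 1, d⟩ : SnakeGraph) := by
  set G' : SnakeGraph := (⟨m, d⟩ : SnakeGraph) with hG'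
  set q : Pt := G'.pos m with hq
  have hposeq : ∀ i, (⟨m+1, d⟩ : SnakeGraph).pos i = G'.pos i := pos_mk (m+1) m d
  have hsumm : q.1 + q.2 = (m : ℤ) := possum G' m
  have hsplitE : (⟨m+1, d⟩ : SnakeGraph).edges =
      tileEdges ((⟨m+1, d⟩ : SnakeGraph).pos (m+1)) ∪ G'.edges := by
    rw [edges, Finset.range_add_one, Finset.biUnion_insert]
    congr 1
    rw [show G'.edges = (Finset.range (m+1)).biUnion (fun i => tileEdges (G'.pos i)) from rfl]
    exact Finset.biUnion_congr rfl (fun i _ => by rw [hposeq i])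
  have hsplitV : (⟨m+1, d⟩ : SnakeGraph).vertices =
      tileVertices ((⟨m+1, d⟩ : SnakeGraph).pos (m+1)) ∪ G'.vertices := by
    rw [vertices, Finset.range_add_one, Finset.biUnion_insert]
    congr 1
    rw [show G'.vertices = (Finset.range (m+1)).biUnion (fun i => tileVertices (G'.pos i)) from rfl]
    exact Finset.biUnion_congr rfl (fun i _ => by rw [hposeq i])
  have hsplitI : (⟨m+1, d⟩ : SnakeGraph).interiorEdges =
      insert ((⟨m+1, d⟩ : SnakeGraph).ie m) G'.interiorEdges := by
    rw [interiorEdges, Finset.range_add_one, Finset.image_insert]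
    congr 1
    rw [show G'.interiorEdges = (Finset.range m).image (fun i => G'.ie i) from rfl]
    exact Finset.image_congr (fun i _ => ie_mk (m+1) m d i)
  by_cases hd : d m
  · -- new tile to the north
    have hp : (⟨m+1, d⟩ : SnakeGraph).pos (m+1) = (q.1, q.2 + 1) := by
      have h0 : (⟨m+1, d⟩ : SnakeGraph).pos (m+1)
          = if d m then (((⟨m+1, d⟩ : SnakeGraph).pos m).1, ((⟨m+1, d⟩ : SnakeGraph).pos m).2 + 1)
            else (((⟨m+1, d⟩ : SnakeGraph).pos m).1 + 1, ((⟨m+1, d⟩ : SnakeGraph).pos m).2) := rfl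
      rw [h0, if_pos hd, hposeq m]
    have hiem : (⟨m+1, d⟩ : SnakeGraph).ie m = ((q.1, q.2 + 1), false) := by
      have h0 : (⟨m+1, d⟩ : SnakeGraph).ie m
          = if d m then north ((⟨m+1, d⟩ : SnakeGraph).pos m)
            else east ((⟨m+1, d⟩ : SnakeGraph).pos m) := rfl
      rw [h0, if_pos hd, hposeq m, north]
    have hi0E : ((q.1, q.2 + 1), false) ∈ G'.edges := by
      simp only [edges, Finset.mem_biUnion, Finset.mem_range]
      refine ⟨m, Nat.lt_succ_self m, ?_⟩
      simp [tileEdges, south, north, west, east, hq]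
    have haV : ((q.1, q.2 + 1) : Pt) ∈ G'.vertices := by
      simp only [vertices, Finset.mem_biUnion, Finset.mem_range]
      refine ⟨m, Nat.lt_succ_self m, ?_⟩
      simp [tileVertices, hq]
    have hbV : ((q.1 + 1, q.2 + 1) : Pt) ∈ G'.vertices := by
      simp only [vertices, Finset.mem_biUnion, Finset.mem_range]
      refine ⟨m, Nat.lt_succ_self m, ?_⟩
      simp [tileVertices, hq]
    refine step _ G' ((q.1, q.2+1), false) ((q.1, q.2+1), true) ((q.1+1, q.2+1), true)
      ((q.1, q.2+1+1), false) (q.1, q.2+1+1) (q.1+1, q.2+1+1) (q.1, q.2+1) (q.1+1, q.2+1)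
      ?_ ?_ ?_ ?_ ?_ ?_ hi0E ?_ ?_ ?_ ?_ haV hbV ?_ ?_ ?_ ?_ ?_ IH
    · -- edges
      rw [hsplitE, hp]
      ext e
      simp only [tileEdges, south, north, west, east, Finset.mem_union, Finset.mem_insert,
        Finset.mem_singleton]
      constructor
      · rintro ((rfl | rfl | rfl | rfl) | h)
        · exact Or.inl hi0E
        · tauto
        · tauto
        · tauto
        · exact Or.inl h
      · rintro (h | rfl | rfl | rfl)
        · tauto
        · tauto
        · tauto
        · tauto
    · -- interior
      rw [hsplitI, hiem]
    · -- vertices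
      rw [hsplitV, hp]
      ext v
      simp only [tileVertices, Finset.mem_union, Finset.mem_insert, Finset.mem_singleton]
      constructor
      · rintro ((rfl | rfl | rfl | rfl) | h)
        · exact Or.inl haV
        · exact Or.inl hbV
        · tauto
        · tauto
        · exact Or.inl h
      · rintro (h | rfl | rfl)
        · tauto
        · tauto
        · tauto
    · -- s₁ ∉ edges
      apply notmem_edges
      intro j hj hmem
      have hj' : j ≤ m := hj
      have hsumj := possum G' j
      have hmono := pos_mono G' hj
      rw [← hq] at hmono
      simp only [tileEdges, south, north, west, east, Finset.mem_insert, Finset.mem_singleton,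
        Prod.mk.injEq, Prod.ext_iff, Bool.true_eq_false, Bool.false_eq_true, and_false,
        false_and, and_true, true_and, false_or, or_false] at hmem
      omega
    · -- s₂ ∉ edges
      apply notmem_edges
      intro j hj hmem
      have hj' : j ≤ m := hj
      have hsumj := possum G' j
      have hmono := pos_mono G' hj
      rw [← hq] at hmono
      simp only [tileEdges, south, north, west, east, Finset.mem_insert, Finset.mem_singleton,
        Prod.mk.injEq, Prod.ext_iff, Bool.true_eq_false, Bool.false_eq_true, and_false,
        false_and, and_true, true_and, false_or, or_false] at hmem
      omega
    · -- f ∉ edges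
      apply notmem_edges
      intro j hj hmem
      have hj' : j ≤ m := hj
      have hsumj := possum G' j
      have hmono := pos_mono G' hj
      rw [← hq] at hmono
      simp only [tileEdges, south, north, west, east, Finset.mem_insert, Finset.mem_singleton,
        Prod.mk.injEq, Prod.ext_iff, Bool.true_eq_false, Bool.false_eq_true, and_false,
        false_and, and_true, true_and, false_or, or_false] at hmem
      omega
    · -- i0 not interior
      intro h
      simp only [interiorEdges, Finset.mem_image, Finset.mem_range] at h
      obtain ⟨j, hj, hie⟩ := h
      have hjm : j < m := hj
      have hsumj := possum G' j
      simp only [ie] at hie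
      split at hie <;>
        simp only [north, east, Prod.mk.injEq, Prod.ext_iff, Bool.true_eq_false,
          Bool.false_eq_true, and_false, false_and, and_true, true_and] at hie <;> omega
    · -- u₁ ∉ vertices
      apply notmem_vertices
      intro j hj hmem
      have hj' : j ≤ m := hj
      have hsumj := possum G' j
      have hmono := pos_mono G' hj
      rw [← hq] at hmono
      simp only [tileVertices, Finset.mem_insert, Finset.mem_singleton, Prod.ext_iff,
        Prod.mk.injEq] at hmem
      omega
    · -- u₂ ∉ vertices
      apply notmem_vertices
      intro j hj hmem
      have hj' : j ≤ m := hj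
      have hsumj := possum G' j
      have hmono := pos_mono G' hj
      rw [← hq] at hmono
      simp only [tileVertices, Finset.mem_insert, Finset.mem_singleton, Prod.ext_iff,
        Prod.mk.injEq] at hmem
      omega
    · -- u₁ ≠ u₂
      intro h
      simp only [Prod.mk.injEq] at h
      omega
    · -- a ≠ b
      intro h
      simp only [Prod.mk.injEq] at h
      omega
    · simp [ends]
    · simp [ends]
    · simp [ends]
    · simp [ends]
  · -- new tile to the east
    have hp : (⟨m+1, d⟩ : SnakeGraph).pos (m+1) = (q.1 + 1, q.2) := by
      have h0 : (⟨m+1, d⟩ : SnakeGraph).pos (m+1)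
          = if d m then (((⟨m+1, d⟩ : SnakeGraph).pos m).1, ((⟨m+1, d⟩ : SnakeGraph).pos m).2 + 1)
            else (((⟨m+1, d⟩ : SnakeGraph).pos m).1 + 1, ((⟨m+1, d⟩ : SnakeGraph).pos m).2) := rfl
      rw [h0, if_neg hd, hposeq m]
    have hiem : (⟨m+1, d⟩ : SnakeGraph).ie m = ((q.1 + 1, q.2), true) := by
      have h0 : (⟨m+1, d⟩ : SnakeGraph).ie m
          = if d m then north ((⟨m+1, d⟩ : SnakeGraph).pos m)
            else east ((⟨m+1, d⟩ : SnakeGraph).pos m) := rfl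
      rw [h0, if_neg hd, hposeq m, east]
    have hi0E : ((q.1 + 1, q.2), true) ∈ G'.edges := by
      simp only [edges, Finset.mem_biUnion, Finset.mem_range]
      refine ⟨m, Nat.lt_succ_self m, ?_⟩
      simp [tileEdges, south, north, west, east, hq]
    have haV : ((q.1 + 1, q.2) : Pt) ∈ G'.vertices := by
      simp only [vertices, Finset.mem_biUnion, Finset.mem_range]
      refine ⟨m, Nat.lt_succ_self m, ?_⟩
      simp [tileVertices, hq]
    have hbV : ((q.1 + 1, q.2 + 1) : Pt) ∈ G'.vertices := by
      simp only [vertices, Finset.mem_biUnion, Finset.mem_range]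
      refine ⟨m, Nat.lt_succ_self m, ?_⟩
      simp [tileVertices, hq]
    refine step _ G' ((q.1+1, q.2), true) ((q.1+1, q.2), false) ((q.1+1, q.2+1), false)
      ((q.1+1+1, q.2), true) (q.1+1+1, q.2) (q.1+1+1, q.2+1) (q.1+1, q.2) (q.1+1, q.2+1)
      ?_ ?_ ?_ ?_ ?_ ?_ hi0E ?_ ?_ ?_ ?_ haV hbV ?_ ?_ ?_ ?_ ?_ IH
    · rw [hsplitE, hp]
      ext e
      simp only [tileEdges, south, north, west, east, Finset.mem_union, Finset.mem_insert,
        Finset.mem_singleton]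
      constructor
      · rintro ((rfl | rfl | rfl | rfl) | h)
        · tauto
        · tauto
        · exact Or.inl hi0E
        · tauto
        · exact Or.inl h
      · rintro (h | rfl | rfl | rfl)
        · tauto
        · tauto
        · tauto
        · tauto
    · rw [hsplitI, hiem]
    · rw [hsplitV, hp]
      ext v
      simp only [tileVertices, Finset.mem_union, Finset.mem_insert, Finset.mem_singleton]
      constructor
      · rintro ((rfl | rfl | rfl | rfl) | h)
        · exact Or.inl haV
        · tauto
        · exact Or.inl hbV
        · tauto
        · exact Or.inl h
      · rintro (h | rfl | rfl)
        · tauto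
        · tauto
        · tauto
    · apply notmem_edges
      intro j hj hmem
      have hj' : j ≤ m := hj
      have hsumj := possum G' j
      have hmono := pos_mono G' hj
      rw [← hq] at hmono
      simp only [tileEdges, south, north, west, east, Finset.mem_insert, Finset.mem_singleton,
        Prod.mk.injEq, Prod.ext_iff, Bool.true_eq_false, Bool.false_eq_true, and_false,
        false_and, and_true, true_and, false_or, or_false] at hmem
      omega
    · apply notmem_edges
      intro j hj hmem
      have hj' : j ≤ m := hj
      have hsumj := possum G' j
      have hmono := pos_mono G' hj
      rw [← hq] at hmono
      simp only [tileEdges, south, north, west, east, Finset.mem_insert, Finset.mem_singleton,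
        Prod.mk.injEq, Prod.ext_iff, Bool.true_eq_false, Bool.false_eq_true, and_false,
        false_and, and_true, true_and, false_or, or_false] at hmem
      omega
    · apply notmem_edges
      intro j hj hmem
      have hj' : j ≤ m := hj
      have hsumj := possum G' j
      have hmono := pos_mono G' hj
      rw [← hq] at hmono
      simp only [tileEdges, south, north, west, east, Finset.mem_insert, Finset.mem_singleton,
        Prod.mk.injEq, Prod.ext_iff, Bool.true_eq_false, Bool.false_eq_true, and_false,
        false_and, and_true, true_and, false_or, or_false] at hmem
      omega
    · intro h
      simp only [interiorEdges, Finset.mem_image, Finset.mem_range] at h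
      obtain ⟨j, hj, hie⟩ := h
      have hjm : j < m := hj
      have hsumj := possum G' j
      simp only [ie] at hie
      split at hie <;>
        simp only [north, east, Prod.mk.injEq, Prod.ext_iff, Bool.true_eq_false,
          Bool.false_eq_true, and_false, false_and, and_true, true_and] at hie <;> omega
    · apply notmem_vertices
      intro j hj hmem
      have hj' : j ≤ m := hj
      have hsumj := possum G' j
      have hmono := pos_mono G' hj
      rw [← hq] at hmono
      simp only [tileVertices, Finset.mem_insert, Finset.mem_singleton, Prod.ext_iff,
        Prod.mk.injEq] at hmem
      omega
    · apply notmem_vertices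
      intro j hj hmem
      have hj' : j ≤ m := hj
      have hsumj := possum G' j
      have hmono := pos_mono G' hj
      rw [← hq] at hmono
      simp only [tileVertices, Finset.mem_insert, Finset.mem_singleton, Prod.ext_iff,
        Prod.mk.injEq] at hmem
      omega
    · intro h
      simp only [Prod.mk.injEq] at h
      omega
    · intro h
      simp only [Prod.mk.injEq] at h
      omega
    · simp [ends]
    · simp [ends]
    · simp [ends]
    · simp [ends]

lemma twoBM (G : SnakeGraph) : TwoBM G := by
  obtain ⟨n, d⟩ := G
  induction n with
  | zero => exact base d
  | succ m ih => exact stepGeom m d ih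

end SnakeGraph
end SnakeCalc

namespace SnakeCalc

/-- A snake graph with `d ≥ 1` tiles has exactly two perfect matchings
consisting only of boundary edges (the minimal and the maximal matching). -/
theorem exactly_two_boundary_matchings (G : SnakeGraph) :
    ∃ P₁ P₂ : Finset Edge, P₁ ≠ P₂ ∧
      (G.IsPerfectMatching P₁ ∧ ∀ e ∈ P₁, e ∉ G.interiorEdges) ∧
      (G.IsPerfectMatching P₂ ∧ ∀ e ∈ P₂, e ∉ G.interiorEdges) ∧
      ∀ P : Finset Edge, G.IsPerfectMatching P → (∀ e ∈ P, e ∉ G.interiorEdges) →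
        P = P₁ ∨ P = P₂ := SnakeGraph.twoBM G

end SnakeCalc
end

section
/- Let G be a snake graph with sign function f and let P be a perfect matching of G consisting of boundary edges only. If a and b are boundary edges in P that are both north-or-east edges, or both south-or-west edges, then f(a) = f(b); if one of them is a north-or-east edge and the other is a south-or-west edge, then f(a) = −f(b). -/
namespace SnakeCalc

open SnakeGraph in
lemma pos_sum (G : SnakeGraph) (i : ℕ) : (G.pos i).1 + (G.pos i).2 = i := by
  induction i with
  | zero => simp [SnakeGraph.pos]
  | succ n ih =>
    rw [SnakeGraph.pos]
    split <;> simp <;> omega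

lemma pos_mk (dir : ℕ → Bool) (N M : ℕ) (i : ℕ) :
    (SnakeGraph.mk N dir).pos i = (SnakeGraph.mk M dir).pos i := by
  induction i with
  | zero => rfl
  | succ n ih => rw [SnakeGraph.pos, SnakeGraph.pos, ih]

open SnakeGraph in
lemma mem_tileEdges {e : Edge} {p : Pt} :
    e ∈ tileEdges p ↔ e = south p ∨ e = north p ∨ e = west p ∨ e = east p := by
  simp [tileEdges]

lemma mem_ends {v : Pt} {e : Edge} :
    v ∈ ends e ↔ v = e.1 ∨ v = (if e.2 then (e.1.1, e.1.2 + 1) else (e.1.1 + 1, e.1.2)) := by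
  simp [ends]

open SnakeGraph in
lemma sum_bounds {e : Edge} {p : Pt} {v : Pt} (he : e ∈ tileEdges p) (hv : v ∈ ends e) :
    p.1 + p.2 ≤ v.1 + v.2 ∧ v.1 + v.2 ≤ p.1 + p.2 + 2 := by
  rw [mem_tileEdges] at he
  rw [mem_ends] at hv
  rcases he with h | h | h | h <;> subst h <;>
    simp [south, north, west, east, Prod.ext_iff] at hv <;>
    rcases hv with ⟨h1, h2⟩ | ⟨h1, h2⟩ <;> omega

open SnakeGraph in
lemma mem_edges {G : SnakeGraph} {e : Edge} :
    e ∈ G.edges ↔ ∃ i ≤ G.n, e ∈ tileEdges (G.pos i) := by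
  simp [SnakeGraph.edges, Finset.mem_biUnion, Finset.mem_range, Nat.lt_succ_iff]

open SnakeGraph in
lemma mem_vertices {G : SnakeGraph} {v : Pt} :
    v ∈ G.vertices ↔ ∃ i ≤ G.n, v ∈ tileVertices (G.pos i) := by
  simp [SnakeGraph.vertices, Finset.mem_biUnion, Finset.mem_range, Nat.lt_succ_iff]

open SnakeGraph in
lemma mem_interior {G : SnakeGraph} {e : Edge} :
    e ∈ G.interiorEdges ↔ ∃ i < G.n, e = G.ie i := by
  simp [SnakeGraph.interiorEdges, eq_comm]

lemma cover_exists {G : SnakeGraph} {P : Finset Edge} (hP : G.IsPerfectMatching P)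
    {v : Pt} (hv : v ∈ G.vertices) : ∃ e ∈ P, v ∈ ends e := by
  have h := hP.2 v hv
  rcases Finset.card_eq_one.mp h with ⟨a, ha⟩
  have : a ∈ P.filter fun e => v ∈ ends e := ha ▸ Finset.mem_singleton_self a
  rw [Finset.mem_filter] at this
  exact ⟨a, this.1, this.2⟩

lemma cover_unique {G : SnakeGraph} {P : Finset Edge} (hP : G.IsPerfectMatching P)
    {v : Pt} (hv : v ∈ G.vertices) {e₁ e₂ : Edge} (h1 : e₁ ∈ P) (hv1 : v ∈ ends e₁)
    (h2 : e₂ ∈ P) (hv2 : v ∈ ends e₂) : e₁ = e₂ := by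
  have h := hP.2 v hv
  rcases Finset.card_eq_one.mp h with ⟨a, ha⟩
  have m1 : e₁ ∈ P.filter fun e => v ∈ ends e := Finset.mem_filter.mpr ⟨h1, hv1⟩
  have m2 : e₂ ∈ P.filter fun e => v ∈ ends e := Finset.mem_filter.mpr ⟨h2, hv2⟩
  rw [ha, Finset.mem_singleton] at m1 m2
  rw [m1, m2]

lemma card_cover_one {P : Finset Edge} {v : Pt} {a : Edge} (ha : a ∈ P) (hva : v ∈ ends a)
    (huniq : ∀ b ∈ P, v ∈ ends b → b = a) : (P.filter fun e => v ∈ ends e).card = 1 := by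
  rw [Finset.card_eq_one]
  refine ⟨a, ?_⟩
  ext b
  simp only [Finset.mem_filter, Finset.mem_singleton]
  constructor
  · rintro ⟨h1, h2⟩; exact huniq b h1 h2
  · rintro rfl; exact ⟨ha, hva⟩

open SnakeGraph in
lemma canon_north (p : Pt) : canonSign (north p) = !canonSign (south p) := by
  simp only [canonSign, south, north, ↓reduceIte, Bool.false_eq_true, ite_true, ite_false]
  cases h : decide ((p.1 + p.2) % 2 = 0) <;> cases h' : decide ((p.1 + (p.2 + 1)) % 2 = 0) <;> simp_all <;> omega

open SnakeGraph in
lemma canon_west (p : Pt) : canonSign (west p) = canonSign (north p) := by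
  simp only [canonSign, south, north, west, ↓reduceIte, Bool.false_eq_true, ite_true, ite_false]
  cases h : decide ((p.1 + p.2) % 2 = 0) <;> cases h' : decide ((p.1 + (p.2 + 1)) % 2 = 0) <;> simp_all <;> omega

open SnakeGraph in
lemma canon_east (p : Pt) : canonSign (east p) = canonSign (south p) := by
  simp only [canonSign, south, east, ↓reduceIte, Bool.false_eq_true, ite_true, ite_false]
  cases h : decide ((p.1 + p.2) % 2 = 0) <;> cases h' : decide ((p.1 + 1 + p.2) % 2 = 0) <;> simp_all <;> omega

open SnakeGraph in
lemma sign_eq {G : SnakeGraph} {f : Edge → Bool} (hf : G.IsSignFunction f) :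
    ∃ k : Bool, ∀ i ≤ G.n, ∀ e ∈ tileEdges (G.pos i), f e = xor (canonSign e) k := by
  refine ⟨xor (canonSign (south (G.pos 0))) (f (south (G.pos 0))), ?_⟩
  have hs : ∀ i ≤ G.n, f (south (G.pos i)) =
      xor (canonSign (south (G.pos i)))
        (xor (canonSign (south (G.pos 0))) (f (south (G.pos 0)))) := by
    intro i
    induction i with
    | zero =>
      intro _
      cases canonSign (south (G.pos 0)) <;> cases f (south (G.pos 0)) <;> rfl
    | succ j ih =>
      intro hj
      have hj' : j ≤ G.n := Nat.le_of_succ_le hj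
      have ihj := ih hj'
      have hfj := hf j hj'
      have hfj1 := hf (j + 1) hj
      by_cases hd : G.dir j
      · have hpos : G.pos (j + 1) = ((G.pos j).1, (G.pos j).2 + 1) := by
          rw [SnakeGraph.pos]; simp [hd]
        have hepe : south (G.pos (j + 1)) = north (G.pos j) := by
          simp [south, north, hpos]
        rw [hepe, hfj.2.2, ihj, canon_north]
        rw [show canonSign (south (G.pos j)) = !canonSign (north (G.pos j)) by
          rw [canon_north]; simp]
        cases canonSign (north (G.pos j)) <;>
          cases (xor (canonSign (south (G.pos 0))) (f (south (G.pos 0)))) <;> rfl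
      · have hd' : G.dir j = false := by simpa using hd
        have hpos : G.pos (j + 1) = ((G.pos j).1 + 1, (G.pos j).2) := by
          rw [SnakeGraph.pos]; simp [hd']
        have hwe : west (G.pos (j + 1)) = east (G.pos j) := by
          simp [west, east, hpos]
        -- f (south (j+1)) = ! f (north (j+1)) = ! f (west (j+1)) = ! f (east j) = ! f (south j)
        have h1 : f (south (G.pos (j + 1))) = ! f (east (G.pos j)) := by
          rw [← hwe, ← hfj1.1, hfj1.2.2]
          simp
        rw [h1, ← hfj.2.1, ihj]
        have hc : canonSign (south (G.pos (j + 1))) = !canonSign (south (G.pos j)) := by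
          simp only [canonSign, south, hpos, ↓reduceIte, Bool.false_eq_true, ite_true, ite_false]
          cases h : decide (((G.pos j).1 + (G.pos j).2) % 2 = 0) <;> cases h' : decide (((G.pos j).1 + 1 + (G.pos j).2) % 2 = 0) <;> simp_all <;> omega
        rw [hc]
        cases canonSign (south (G.pos j)) <;>
          cases (xor (canonSign (south (G.pos 0))) (f (south (G.pos 0)))) <;> rfl
  intro i hi e he
  rw [mem_tileEdges] at he
  have hfi := hf i hi
  rcases he with rfl | rfl | rfl | rfl
  · exact hs i hi
  · rw [hfi.2.2, hs i hi, canon_north]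
    cases canonSign (south (G.pos i)) <;>
      cases (xor (canonSign (south (G.pos 0))) (f (south (G.pos 0)))) <;> rfl
  · rw [← hfi.1, hfi.2.2, hs i hi, canon_west, canon_north]
    cases canonSign (south (G.pos i)) <;>
      cases (xor (canonSign (south (G.pos 0))) (f (south (G.pos 0)))) <;> rfl
  · rw [← hfi.2.1, hs i hi, canon_east]

/-- `pos`, independent of the length field. -/
def pp (dir : ℕ → Bool) : ℕ → Pt := (SnakeGraph.mk 0 dir).pos

lemma pp_zero (dir : ℕ → Bool) : pp dir 0 = ((0 : ℤ), (0 : ℤ)) := rfl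

lemma pp_succ (dir : ℕ → Bool) (i : ℕ) :
    pp dir (i + 1) =
      if dir i then ((pp dir i).1, (pp dir i).2 + 1) else ((pp dir i).1 + 1, (pp dir i).2) := by
  rw [pp, SnakeGraph.pos]

lemma pos_pp (G : SnakeGraph) (i : ℕ) : G.pos i = pp G.dir i := by
  induction i with
  | zero => rfl
  | succ n ih => rw [SnakeGraph.pos, ih, pp_succ]

lemma pp_sum (dir : ℕ → Bool) (i : ℕ) : (pp dir i).1 + (pp dir i).2 = i := by
  rw [← pos_pp (SnakeGraph.mk 0 dir)]; exact pos_sum _ i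

open SnakeGraph in
lemma mem_edges_mk {N : ℕ} {dir : ℕ → Bool} {e : Edge} :
    e ∈ (SnakeGraph.mk N dir).edges ↔ ∃ i ≤ N, e ∈ tileEdges (pp dir i) := by
  rw [mem_edges]
  constructor
  · rintro ⟨i, hi, h⟩; rw [pos_pp] at h; exact ⟨i, hi, h⟩
  · rintro ⟨i, hi, h⟩; rw [← pos_pp (SnakeGraph.mk N dir)] at h; exact ⟨i, hi, h⟩

open SnakeGraph in
lemma mem_vertices_mk {N : ℕ} {dir : ℕ → Bool} {v : Pt} :
    v ∈ (SnakeGraph.mk N dir).vertices ↔ ∃ i ≤ N, v ∈ tileVertices (pp dir i) := by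
  rw [mem_vertices]
  constructor
  · rintro ⟨i, hi, h⟩; rw [pos_pp] at h; exact ⟨i, hi, h⟩
  · rintro ⟨i, hi, h⟩; rw [← pos_pp (SnakeGraph.mk N dir)] at h; exact ⟨i, hi, h⟩

open SnakeGraph in
lemma mem_interior_mk {N : ℕ} {dir : ℕ → Bool} {e : Edge} :
    e ∈ (SnakeGraph.mk N dir).interiorEdges ↔
      ∃ i < N, e = (if dir i then north (pp dir i) else east (pp dir i)) := by
  rw [mem_interior]
  constructor
  · rintro ⟨i, hi, h⟩
    refine ⟨i, hi, ?_⟩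
    rw [h, SnakeGraph.ie, pos_pp]
  · rintro ⟨i, hi, h⟩
    refine ⟨i, hi, ?_⟩
    rw [h, SnakeGraph.ie, pos_pp]

open SnakeGraph in
lemma mem_tileVertices {v : Pt} {p : Pt} :
    v ∈ tileVertices p ↔
      v = p ∨ v = (p.1 + 1, p.2) ∨ v = (p.1, p.2 + 1) ∨ v = (p.1 + 1, p.2 + 1) := by
  simp [tileVertices]

open SnakeGraph in
lemma tileVertices_sum {v p : Pt} (h : v ∈ tileVertices p) :
    p.1 + p.2 ≤ v.1 + v.2 ∧ v.1 + v.2 ≤ p.1 + p.2 + 2 := by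
  rw [mem_tileVertices] at h
  rcases h with rfl | rfl | rfl | rfl <;> simp <;> omega

open SnakeGraph in
lemma tile_cases {e : Edge} {p v : Pt} (he : e ∈ tileEdges p) (hv : v ∈ ends e) :
    (e = south p ∧ (v = p ∨ v = (p.1 + 1, p.2))) ∨
    (e = north p ∧ (v = (p.1, p.2 + 1) ∨ v = (p.1 + 1, p.2 + 1))) ∨
    (e = west p ∧ (v = p ∨ v = (p.1, p.2 + 1))) ∨
    (e = east p ∧ (v = (p.1 + 1, p.2) ∨ v = (p.1 + 1, p.2 + 1))) := by
  rw [mem_tileEdges] at he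
  rcases he with rfl | rfl | rfl | rfl <;>
    simp [mem_ends, south, north, west, east] at hv <;> tauto

lemma canon_horiz (p : Pt) : canonSign (p, false) = decide ((p.1 + p.2) % 2 = 0) := by
  simp [canonSign]

lemma canon_vert (p : Pt) : canonSign (p, true) = !decide ((p.1 + p.2) % 2 = 0) := by
  have h : canonSign (p, true) = decide ¬((p.1 + p.2) % 2 = 0) := if_pos rfl
  rw [h, decide_not]

lemma not_inj {a b : Bool} (h : !a = !b) : a = b := by
  cases a <;> cases b <;> simp_all

open SnakeGraph in
lemma mem_ends_south {v p : Pt} : v ∈ ends (south p) ↔ v = p ∨ v = (p.1 + 1, p.2) := by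
  simp [mem_ends, south]

open SnakeGraph in
lemma mem_ends_north {v p : Pt} :
    v ∈ ends (north p) ↔ v = (p.1, p.2 + 1) ∨ v = (p.1 + 1, p.2 + 1) := by
  simp [mem_ends, north]

open SnakeGraph in
lemma mem_ends_west {v p : Pt} : v ∈ ends (west p) ↔ v = p ∨ v = (p.1, p.2 + 1) := by
  simp [mem_ends, west]

open SnakeGraph in
lemma mem_ends_east {v p : Pt} :
    v ∈ ends (east p) ↔ v = (p.1 + 1, p.2) ∨ v = (p.1 + 1, p.2 + 1) := by
  simp [mem_ends, east]

open SnakeGraph in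
lemma edge_loc {N : ℕ} {dir : ℕ → Bool} {P : Finset Edge}
    (hsub : P ⊆ (SnakeGraph.mk N dir).edges) {a : Edge} {v : Pt}
    (ha : a ∈ P) (hv : v ∈ ends a) :
    ∃ i ≤ N, a ∈ tileEdges (pp dir i) ∧ (i : ℤ) ≤ v.1 + v.2 ∧ v.1 + v.2 ≤ (i : ℤ) + 2 := by
  obtain ⟨i, hi, ht⟩ := mem_edges_mk.mp (hsub ha)
  have hb := sum_bounds ht hv
  have hs := pp_sum dir i
  exact ⟨i, hi, ht, by omega, by omega⟩

open SnakeGraph in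
lemma vertex_top {N : ℕ} {dir : ℕ → Bool} {v : Pt}
    (hv : v ∈ (SnakeGraph.mk N dir).vertices) :
    v.1 + v.2 ≤ (N : ℤ) + 2 ∧
      (v.1 + v.2 = (N : ℤ) + 2 → v = ((pp dir N).1 + 1, (pp dir N).2 + 1)) := by
  obtain ⟨j, hj, hvt⟩ := mem_vertices_mk.mp hv
  have hsj := pp_sum dir j
  have hb := tileVertices_sum hvt
  constructor
  · omega
  · intro htop
    have hjN : j = N := by omega
    subst hjN
    rw [mem_tileVertices] at hvt
    rcases hvt with rfl | rfl | rfl | rfl <;> simp [Prod.ext_iff] at htop ⊢ <;> omega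

open SnakeGraph in
lemma vertices_mono {N : ℕ} {dir : ℕ → Bool} {v : Pt}
    (hv : v ∈ (SnakeGraph.mk N dir).vertices) :
    v ∈ (SnakeGraph.mk (N + 1) dir).vertices := by
  obtain ⟨j, hj, hvt⟩ := mem_vertices_mk.mp hv
  exact mem_vertices_mk.mpr ⟨j, by omega, hvt⟩

set_option maxHeartbeats 1000000 in
open SnakeGraph in
lemma main (dir : ℕ → Bool) (N : ℕ) : ∀ (P : Finset Edge),
    (SnakeGraph.mk N dir).IsPerfectMatching P →
    (∀ e ∈ P, (SnakeGraph.mk N dir).IsBoundaryEdge e) →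
    ∃ c : Bool, ∀ e ∈ P, ∀ i ≤ N,
      ((e = north (pp dir i) ∨ e = east (pp dir i)) → canonSign e = c) ∧
      ((e = south (pp dir i) ∨ e = west (pp dir i)) → canonSign e = !c) := by
  induction N with
  | zero =>
    intro P hP hbd
    have hpp0 : pp dir 0 = ((0 : ℤ), (0 : ℤ)) := pp_zero dir
    have hvert : ∀ w : Pt, w ∈ tileVertices (pp dir 0) →
        w ∈ (SnakeGraph.mk 0 dir).vertices := by
      intro w hw; exact mem_vertices_mk.mpr ⟨0, le_rfl, hw⟩
    have h00 : ((0 : ℤ), (0 : ℤ)) ∈ (SnakeGraph.mk 0 dir).vertices := by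
      apply hvert; rw [mem_tileVertices, hpp0]; tauto
    have h10 : ((1 : ℤ), (0 : ℤ)) ∈ (SnakeGraph.mk 0 dir).vertices := by
      apply hvert; rw [mem_tileVertices, hpp0]; norm_num
    have h01 : ((0 : ℤ), (1 : ℤ)) ∈ (SnakeGraph.mk 0 dir).vertices := by
      apply hvert; rw [mem_tileVertices, hpp0]; norm_num
    -- every edge of P is an edge of the unique tile
    have hloc : ∀ a ∈ P, a ∈ tileEdges (pp dir 0) := by
      intro a ha
      obtain ⟨i, hi, ht⟩ := mem_edges_mk.mp (hP.1 ha)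
      interval_cases i
      exact ht
    obtain ⟨a, haP, hva⟩ := cover_exists hP h00
    have ha4 := mem_tileEdges.mp (hloc a haP)
    rw [hpp0] at ha4
    have hsw : a = south ((0 : ℤ), (0 : ℤ)) ∨ a = west ((0 : ℤ), (0 : ℤ)) := by
      rcases ha4 with rfl | rfl | rfl | rfl
      · left; rfl
      · exfalso; rw [mem_ends_north] at hva
        simp [Prod.ext_iff] at hva
      · right; rfl
      · exfalso; rw [mem_ends_east] at hva
        simp [Prod.ext_iff] at hva
    rcases hsw with rfl | rfl
    · -- south is in P
      refine ⟨false, ?_⟩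
      have hwP : west ((0 : ℤ), (0 : ℤ)) ∉ P := by
        intro hw
        have := cover_unique hP h00 hw (by rw [mem_ends_west]; left; rfl) haP hva
        simp [south, west, Prod.ext_iff] at this
      have heP : east ((0 : ℤ), (0 : ℤ)) ∉ P := by
        intro he
        have := cover_unique hP h10 he (by rw [mem_ends_east]; norm_num) haP
          (by rw [mem_ends_south]; norm_num)
        simp [south, east, Prod.ext_iff] at this
      intro e he i hi
      have hi0 : i = 0 := by omega
      subst hi0
      have he4 := mem_tileEdges.mp (hloc e he)
      rw [hpp0] at he4
      have hsn : e = south ((0 : ℤ), (0 : ℤ)) ∨ e = north ((0 : ℤ), (0 : ℤ)) := by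
        rcases he4 with rfl | rfl | rfl | rfl
        · left; rfl
        · right; rfl
        · exact absurd he hwP
        · exact absurd he heP
      rw [hpp0]
      rcases hsn with rfl | rfl
      · constructor
        · rintro (h | h) <;> simp [south, north, east, Prod.ext_iff] at h
        · intro _
          norm_num [canonSign, south]
      · constructor
        · intro _
          norm_num [canonSign, north]
        · rintro (h | h) <;> simp [south, north, west, Prod.ext_iff] at h
    · -- west is in P
      refine ⟨true, ?_⟩
      have hsP : south ((0 : ℤ), (0 : ℤ)) ∉ P := by
        intro hs
        have := cover_unique hP h00 hs (by rw [mem_ends_south]; left; rfl) haP hva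
        simp [south, west, Prod.ext_iff] at this
      have hnP : north ((0 : ℤ), (0 : ℤ)) ∉ P := by
        intro hn
        have := cover_unique hP h01 hn (by rw [mem_ends_north]; norm_num) haP
          (by rw [mem_ends_west]; norm_num)
        simp [north, west, Prod.ext_iff] at this
      intro e he i hi
      have hi0 : i = 0 := by omega
      subst hi0
      have he4 := mem_tileEdges.mp (hloc e he)
      rw [hpp0] at he4
      have hwe : e = west ((0 : ℤ), (0 : ℤ)) ∨ e = east ((0 : ℤ), (0 : ℤ)) := by
        rcases he4 with rfl | rfl | rfl | rfl
        · exact absurd he hsP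
        · exact absurd he hnP
        · left; rfl
        · right; rfl
      rw [hpp0]
      rcases hwe with rfl | rfl
      · constructor
        · rintro (h | h) <;> simp [west, north, east, Prod.ext_iff] at h
        · intro _
          norm_num [canonSign, west]
      · constructor
        · intro _
          norm_num [canonSign, east]
        · rintro (h | h) <;> simp [south, west, east, Prod.ext_iff] at h
  | succ N IH =>
    intro P hP hbd
    have hpsum : (pp dir N).1 + (pp dir N).2 = (N : ℤ) := pp_sum dir N
    have hint : ∀ e ∈ P, e ∉ (SnakeGraph.mk (N + 1) dir).interiorEdges :=
      fun e he => (hbd e he).2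
    by_cases hd : dir N
    · -- tile N+1 sits to the NORTH of tile N
      have hq : pp dir (N + 1) = ((pp dir N).1, (pp dir N).2 + 1) := by
        rw [pp_succ, if_pos hd]
      have hienN : north (pp dir N) ∉ P := by
        intro h
        exact hint _ h (mem_interior_mk.mpr ⟨N, by omega, (if_pos hd).symm⟩)
      have hsq : south (pp dir (N + 1)) = north (pp dir N) := by
        rw [hq]; rfl
      have hsqP : south (pp dir (N + 1)) ∉ P := by rw [hsq]; exact hienN
      -- candidates at the top-left new vertex
      have E1 : ∀ a ∈ P, (((pp dir N).1, (pp dir N).2 + 2) : Pt) ∈ ends a →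
          a = north (pp dir (N + 1)) ∨ a = west (pp dir (N + 1)) := by
        intro a ha hv
        obtain ⟨i, hi, ht, hb1, hb2⟩ := edge_loc hP.1 ha hv
        replace hb1 : (i : ℤ) ≤ (pp dir N).1 + ((pp dir N).2 + 2) := hb1
        replace hb2 : (pp dir N).1 + ((pp dir N).2 + 2) ≤ (i : ℤ) + 2 := hb2
        have hiN : i = N ∨ i = N + 1 := by omega
        rcases hiN with rfl | rfl
        · exfalso
          rcases tile_cases ht hv with ⟨rfl, h⟩ | ⟨rfl, h⟩ | ⟨rfl, h⟩ | ⟨rfl, h⟩ <;>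
            simp [Prod.ext_iff] at h <;> all_goals omega
        · rcases tile_cases ht hv with ⟨rfl, h⟩ | ⟨rfl, h⟩ | ⟨rfl, h⟩ | ⟨rfl, h⟩
          · exfalso; rw [hq] at h; simp [Prod.ext_iff] at h; all_goals omega
          · left; rfl
          · right; rfl
          · exfalso; rw [hq] at h; simp [Prod.ext_iff] at h; all_goals omega
      -- candidates at the top-right new vertex
      have E2 : ∀ a ∈ P, (((pp dir N).1 + 1, (pp dir N).2 + 2) : Pt) ∈ ends a →
          a = north (pp dir (N + 1)) ∨ a = east (pp dir (N + 1)) := by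
        intro a ha hv
        obtain ⟨i, hi, ht, hb1, hb2⟩ := edge_loc hP.1 ha hv
        replace hb1 : (i : ℤ) ≤ (pp dir N).1 + 1 + ((pp dir N).2 + 2) := hb1
        replace hb2 : (pp dir N).1 + 1 + ((pp dir N).2 + 2) ≤ (i : ℤ) + 2 := hb2
        have hiN : i = N + 1 := by omega
        subst hiN
        rcases tile_cases ht hv with ⟨rfl, h⟩ | ⟨rfl, h⟩ | ⟨rfl, h⟩ | ⟨rfl, h⟩
        · exfalso; rw [hq] at h; simp [Prod.ext_iff] at h; all_goals omega
        · left; rfl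
        · exfalso; rw [hq] at h; simp [Prod.ext_iff] at h; all_goals omega
        · right; rfl
      have hv1mem : (((pp dir N).1, (pp dir N).2 + 2) : Pt) ∈
          (SnakeGraph.mk (N + 1) dir).vertices := by
        refine mem_vertices_mk.mpr ⟨N + 1, le_rfl, ?_⟩
        rw [mem_tileVertices, hq]; simp [Prod.ext_iff]; all_goals omega
      have hv2mem : (((pp dir N).1 + 1, (pp dir N).2 + 2) : Pt) ∈
          (SnakeGraph.mk (N + 1) dir).vertices := by
        refine mem_vertices_mk.mpr ⟨N + 1, le_rfl, ?_⟩
        rw [mem_tileVertices, hq]; simp [Prod.ext_iff]; all_goals omega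
      have hv1n : (((pp dir N).1, (pp dir N).2 + 2) : Pt) ∈ ends (north (pp dir (N + 1))) := by
        rw [mem_ends_north, hq]; simp [Prod.ext_iff]; all_goals omega
      have hv1w : (((pp dir N).1, (pp dir N).2 + 2) : Pt) ∈ ends (west (pp dir (N + 1))) := by
        rw [mem_ends_west, hq]; simp [Prod.ext_iff]; all_goals omega
      have hv2n : (((pp dir N).1 + 1, (pp dir N).2 + 2) : Pt) ∈
          ends (north (pp dir (N + 1))) := by
        rw [mem_ends_north, hq]; simp [Prod.ext_iff]; all_goals omega
      have hv2e : (((pp dir N).1 + 1, (pp dir N).2 + 2) : Pt) ∈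
          ends (east (pp dir (N + 1))) := by
        rw [mem_ends_east, hq]; simp [Prod.ext_iff]; all_goals omega
      obtain ⟨a₀, ha₀, hva₀⟩ := cover_exists hP hv1mem
      rcases E1 a₀ ha₀ hva₀ with rfl | rfl
      · -- CASE A : the north edge of the last tile is in P
        have hwq : west (pp dir (N + 1)) ∉ P := by
          intro hw
          have := cover_unique hP hv1mem hw hv1w ha₀ hva₀
          simp [north, west, Prod.ext_iff] at this
        have heq : east (pp dir (N + 1)) ∉ P := by
          intro heast
          have := cover_unique hP hv2mem heast hv2e ha₀ hv2n
          simp [north, east, Prod.ext_iff] at this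
        have hmatchA : (SnakeGraph.mk N dir).IsPerfectMatching
            (P.erase (north (pp dir (N + 1)))) := by
          constructor
          · intro e heA
            obtain ⟨hne, heP⟩ := Finset.mem_erase.mp heA
            obtain ⟨i, hi, ht⟩ := mem_edges_mk.mp (hP.1 heP)
            by_cases hiN : i ≤ N
            · exact mem_edges_mk.mpr ⟨i, hiN, ht⟩
            · exfalso
              have : i = N + 1 := by omega
              subst this
              rcases mem_tileEdges.mp ht with rfl | rfl | rfl | rfl
              · exact hsqP heP
              · exact hne rfl
              · exact hwq heP
              · exact heq heP
          · intro v hv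
            have hvup : v ∈ (SnakeGraph.mk (N + 1) dir).vertices := vertices_mono hv
            have htop := vertex_top hv
            have h1 := htop.1
            have h2 := htop.2
            have hvne : v ∉ ends (north (pp dir (N + 1))) := by
              intro hmem
              rw [mem_ends_north, hq] at hmem
              rcases hmem with rfl | rfl <;> simp [Prod.ext_iff] at h1 h2 <;> all_goals omega
            obtain ⟨b₀, hb₀, hvb₀⟩ := cover_exists hP hvup
            have hb₀ne : b₀ ≠ north (pp dir (N + 1)) := by rintro rfl; exact hvne hvb₀
            apply card_cover_one (Finset.mem_erase.mpr ⟨hb₀ne, hb₀⟩) hvb₀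
            intro b hb hvb
            obtain ⟨hbne, hbP⟩ := Finset.mem_erase.mp hb
            exact cover_unique hP hvup hbP hvb hb₀ hvb₀
        have hbdA : ∀ e ∈ P.erase (north (pp dir (N + 1))),
            (SnakeGraph.mk N dir).IsBoundaryEdge e := by
          intro e heA
          refine ⟨hmatchA.1 heA, ?_⟩
          intro hin
          obtain ⟨j, hj, hje⟩ := mem_interior_mk.mp hin
          exact hint e (Finset.mem_erase.mp heA).2 (mem_interior_mk.mpr ⟨j, by omega, hje⟩)
        obtain ⟨c, hc⟩ := IH _ hmatchA hbdA
        have hqv : (((pp dir N).1, (pp dir N).2 + 1) : Pt) ∈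
            (SnakeGraph.mk (N + 1) dir).vertices := by
          refine mem_vertices_mk.mpr ⟨N + 1, le_rfl, ?_⟩
          rw [mem_tileVertices, hq]; simp [Prod.ext_iff]; all_goals omega
        obtain ⟨a, haP, hva⟩ := cover_exists hP hqv
        have hcanon : canonSign (north (pp dir (N + 1))) = c := by
          obtain ⟨i, hi, ht, hb1, hb2⟩ := edge_loc hP.1 haP hva
          replace hb1 : (i : ℤ) ≤ (pp dir N).1 + ((pp dir N).2 + 1) := hb1
          replace hb2 : (pp dir N).1 + ((pp dir N).2 + 1) ≤ (i : ℤ) + 2 := hb2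
          have hiN : i + 1 = N ∨ i = N ∨ i = N + 1 := by omega
          rcases hiN with hii | hii2 | rfl
          · -- the tile below-left
            have hN1 : N = i + 1 := by omega
            subst hN1
            have hpr := pp_succ dir i
            by_cases hdi : dir i
            · rw [if_pos hdi] at hpr
              exfalso
              rcases tile_cases ht hva with ⟨rfl, h⟩ | ⟨rfl, h⟩ | ⟨rfl, h⟩ | ⟨rfl, h⟩ <;>
                rw [hpr] at h <;> simp [Prod.ext_iff] at h <;> all_goals omega
            · rw [if_neg hdi] at hpr
              have hie : east (pp dir i) ∉ P := by
                intro hmem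
                exact hint _ hmem (mem_interior_mk.mpr ⟨i, by omega, (if_neg hdi).symm⟩)
              rcases tile_cases ht hva with ⟨rfl, h⟩ | ⟨rfl, h⟩ | ⟨rfl, h⟩ | ⟨rfl, h⟩
              · exfalso; rw [hpr] at h; simp [Prod.ext_iff] at h; all_goals omega
              · -- a = north (tile i)
                have haPA : north (pp dir i) ∈ P.erase (north (pp dir (i + 1 + 1))) := by
                  rw [Finset.mem_erase]
                  refine ⟨?_, haP⟩
                  intro hh
                  have hsi := pp_sum dir i
                  have hsi2 := pp_sum dir (i + 1 + 1)
                  simp [north, Prod.ext_iff] at hh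
                  omega
                have hnc := (hc _ haPA i (by omega)).1 (Or.inl rfl)
                rw [← hnc, hq, hpr]
                simp only [north, canon_horiz]
                rw [decide_eq_decide]
                omega
              · exfalso; rw [hpr] at h; simp [Prod.ext_iff] at h; all_goals omega
              · exact absurd haP hie
          · -- the tile below
            have hii3 : N = i := hii2.symm
            subst hii3
            rcases tile_cases ht hva with ⟨rfl, h⟩ | ⟨rfl, h⟩ | ⟨rfl, h⟩ | ⟨rfl, h⟩
            · exfalso; simp [Prod.ext_iff] at h; all_goals omega
            · exact absurd haP hienN
            · -- a = west (tile N)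
              have haPA : west (pp dir N) ∈ P.erase (north (pp dir (N + 1))) := by
                rw [Finset.mem_erase]
                exact ⟨by simp [west, north, Prod.ext_iff], haP⟩
              have hwc := (hc _ haPA N le_rfl).2 (Or.inr rfl)
              rw [show west (pp dir N) = ((pp dir N), true) from rfl, canon_vert] at hwc
              have hwcA : decide (((pp dir N).1 + (pp dir N).2) % 2 = 0) = c := by
                simpa using congrArg (fun b => !b) hwc
              rw [← hwcA, hq]
              simp only [north, canon_horiz]
              rw [decide_eq_decide]
              omega
            · exfalso; simp [Prod.ext_iff] at h; all_goals omega
          · -- the tile itself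
            exfalso
            rcases tile_cases ht hva with ⟨rfl, h⟩ | ⟨rfl, h⟩ | ⟨rfl, h⟩ | ⟨rfl, h⟩
            · exact hsqP haP
            · rw [hq] at h; simp [Prod.ext_iff] at h; all_goals omega
            · exact hwq haP
            · rw [hq] at h; simp [Prod.ext_iff] at h; all_goals omega
        refine ⟨c, ?_⟩
        intro e he i hi
        by_cases henq : e = north (pp dir (N + 1))
        · subst henq
          constructor
          · intro _; exact hcanon
          · rintro (h | h)
            · exfalso
              have hsi := pp_sum dir i
              rw [hq] at h
              simp [north, south, Prod.ext_iff] at h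
              omega
            · exfalso; rw [hq] at h; simp [north, west, Prod.ext_iff] at h
        · have heA : e ∈ P.erase (north (pp dir (N + 1))) := Finset.mem_erase.mpr ⟨henq, he⟩
          by_cases hiN : i ≤ N
          · exact hc e heA i hiN
          · have : i = N + 1 := by omega
            subst this
            constructor
            · rintro (h | h)
              · exact absurd h henq
              · rw [h] at he; exact absurd he heq
            · rintro (h | h)
              · rw [hsq] at h; rw [h] at he; exact absurd he hienN
              · rw [h] at he; exact absurd he hwq
      · -- CASE B : the west edge of the last tile is in P
        have hnqP : north (pp dir (N + 1)) ∉ P := by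
          intro hn
          have := cover_unique hP hv1mem hn hv1n ha₀ hva₀
          simp [north, west, Prod.ext_iff] at this
        obtain ⟨a₂, ha₂, hva₂⟩ := cover_exists hP hv2mem
        rcases E2 a₂ ha₂ hva₂ with rfl | rfl
        · exact absurd ha₂ hnqP
        -- now: west q ∈ P (ha₀), east q ∈ P (ha₂)
        have hqe : (((pp dir N).1, (pp dir N).2 + 1) : Pt) ∈ ends (west (pp dir (N + 1))) := by
          rw [mem_ends_west, hq]; simp [Prod.ext_iff]; all_goals omega
        have hq2e : (((pp dir N).1 + 1, (pp dir N).2 + 1) : Pt) ∈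
            ends (east (pp dir (N + 1))) := by
          rw [mem_ends_east, hq]; simp [Prod.ext_iff]; all_goals omega
        have hqnp : (((pp dir N).1, (pp dir N).2 + 1) : Pt) ∈ ends (north (pp dir N)) := by
          rw [mem_ends_north]; simp [Prod.ext_iff]; all_goals omega
        have hq2np : (((pp dir N).1 + 1, (pp dir N).2 + 1) : Pt) ∈ ends (north (pp dir N)) := by
          rw [mem_ends_north]; simp [Prod.ext_iff]; all_goals omega
        have hqv1 : (((pp dir N).1, (pp dir N).2 + 1) : Pt) ∈
            (SnakeGraph.mk (N + 1) dir).vertices := by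
          refine mem_vertices_mk.mpr ⟨N + 1, le_rfl, ?_⟩
          rw [mem_tileVertices, hq]; simp [Prod.ext_iff]; all_goals omega
        have hqv2 : (((pp dir N).1 + 1, (pp dir N).2 + 1) : Pt) ∈
            (SnakeGraph.mk (N + 1) dir).vertices := by
          refine mem_vertices_mk.mpr ⟨N + 1, le_rfl, ?_⟩
          rw [mem_tileVertices, hq]; simp [Prod.ext_iff]; all_goals omega
        have hmemPB : ∀ e ∈ P, e ≠ west (pp dir (N + 1)) → e ≠ east (pp dir (N + 1)) →
            e ∈ insert (north (pp dir N))
              ((P.erase (west (pp dir (N + 1)))).erase (east (pp dir (N + 1)))) := by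
          intro e he h1 h2
          exact Finset.mem_insert_of_mem
            (Finset.mem_erase.mpr ⟨h2, Finset.mem_erase.mpr ⟨h1, he⟩⟩)
        have hmemPBr : ∀ e ∈ insert (north (pp dir N))
            ((P.erase (west (pp dir (N + 1)))).erase (east (pp dir (N + 1)))),
            e = north (pp dir N) ∨
            (e ∈ P ∧ e ≠ west (pp dir (N + 1)) ∧ e ≠ east (pp dir (N + 1))) := by
          intro e he
          rcases Finset.mem_insert.mp he with h | h
          · exact Or.inl h
          · obtain ⟨h2, h3⟩ := Finset.mem_erase.mp h
            obtain ⟨h4, h5⟩ := Finset.mem_erase.mp h3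
            exact Or.inr ⟨h5, h4, h2⟩
        have hnpPB : north (pp dir N) ∈ insert (north (pp dir N))
            ((P.erase (west (pp dir (N + 1)))).erase (east (pp dir (N + 1)))) :=
          Finset.mem_insert_self _ _
        have hmatchB : (SnakeGraph.mk N dir).IsPerfectMatching
            (insert (north (pp dir N))
              ((P.erase (west (pp dir (N + 1)))).erase (east (pp dir (N + 1))))) := by
          constructor
          · intro e heB
            rcases hmemPBr e heB with rfl | ⟨heP, h1, h2⟩
            · exact mem_edges_mk.mpr ⟨N, le_rfl, by rw [mem_tileEdges]; tauto⟩
            · obtain ⟨i, hi, ht⟩ := mem_edges_mk.mp (hP.1 heP)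
              by_cases hiN : i ≤ N
              · exact mem_edges_mk.mpr ⟨i, hiN, ht⟩
              · exfalso
                have : i = N + 1 := by omega
                subst this
                rcases mem_tileEdges.mp ht with rfl | rfl | rfl | rfl
                · exact hsqP heP
                · exact hnqP heP
                · exact h1 rfl
                · exact h2 rfl
          · intro v hv
            have hvup : v ∈ (SnakeGraph.mk (N + 1) dir).vertices := vertices_mono hv
            have htop := vertex_top hv
            have h1 := htop.1
            have h2 := htop.2
            by_cases hvq : v = (((pp dir N).1, (pp dir N).2 + 1) : Pt)
            · subst hvq
              apply card_cover_one hnpPB hqnp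
              intro b hb hvb
              rcases hmemPBr b hb with rfl | ⟨hbP, hb1, hb2⟩
              · rfl
              · exact absurd (cover_unique hP hqv1 hbP hvb ha₀ hqe) hb1
            · by_cases hvq2 : v = (((pp dir N).1 + 1, (pp dir N).2 + 1) : Pt)
              · subst hvq2
                apply card_cover_one hnpPB hq2np
                intro b hb hvb
                rcases hmemPBr b hb with rfl | ⟨hbP, hb1, hb2⟩
                · rfl
                · exact absurd (cover_unique hP hqv2 hbP hvb ha₂ hq2e) hb2
              · obtain ⟨b₀, hb₀, hvb₀⟩ := cover_exists hP hvup
                have hb₀w : b₀ ≠ west (pp dir (N + 1)) := by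
                  rintro rfl
                  rw [mem_ends_west, hq] at hvb₀
                  rcases hvb₀ with rfl | rfl
                  · exact hvq rfl
                  · simp [Prod.ext_iff] at h1 h2; all_goals omega
                have hb₀e : b₀ ≠ east (pp dir (N + 1)) := by
                  rintro rfl
                  rw [mem_ends_east, hq] at hvb₀
                  rcases hvb₀ with rfl | rfl
                  · exact hvq2 rfl
                  · simp [Prod.ext_iff] at h1 h2; all_goals omega
                apply card_cover_one (hmemPB b₀ hb₀ hb₀w hb₀e) hvb₀
                intro b hb hvb
                rcases hmemPBr b hb with rfl | ⟨hbP, hb1, hb2⟩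
                · exfalso
                  rw [mem_ends_north] at hvb
                  rcases hvb with rfl | rfl
                  · exact hvq rfl
                  · exact hvq2 rfl
                · exact cover_unique hP hvup hbP hvb hb₀ hvb₀
        have hbdB : ∀ e ∈ insert (north (pp dir N))
            ((P.erase (west (pp dir (N + 1)))).erase (east (pp dir (N + 1)))),
            (SnakeGraph.mk N dir).IsBoundaryEdge e := by
          intro e heB
          refine ⟨hmatchB.1 heB, ?_⟩
          intro hin
          obtain ⟨j, hj, hje⟩ := mem_interior_mk.mp hin
          rcases hmemPBr e heB with rfl | ⟨heP, h1, h2⟩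
          · have hsj := pp_sum dir j
            by_cases hdj : dir j
            · rw [if_pos hdj] at hje
              simp [north, Prod.ext_iff] at hje
              omega
            · rw [if_neg hdj] at hje
              simp [north, east, Prod.ext_iff] at hje
          · exact hint e heP (mem_interior_mk.mpr ⟨j, by omega, hje⟩)
        obtain ⟨c, hc⟩ := IH _ hmatchB hbdB
        have hnpc : canonSign (north (pp dir N)) = c :=
          (hc _ hnpPB N le_rfl).1 (Or.inl rfl)
        have hwqc : canonSign (west (pp dir (N + 1))) = !c := by
          rw [← hnpc, hq]
          rw [show west (((pp dir N).1, (pp dir N).2 + 1) : Pt) =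
            ((((pp dir N).1, (pp dir N).2 + 1) : Pt), true) from rfl, canon_vert]
          rw [show north (pp dir N) = ((((pp dir N).1, (pp dir N).2 + 1) : Pt), false) from rfl,
            canon_horiz]
        have heqc : canonSign (east (pp dir (N + 1))) = c := by
          rw [← hnpc, hq]
          simp only [east, north, canon_vert, canon_horiz]
          rw [← decide_not, decide_eq_decide]
          omega
        refine ⟨c, ?_⟩
        intro e he i hi
        have hsi := pp_sum dir i
        by_cases hew : e = west (pp dir (N + 1))
        · subst hew
          constructor
          · rintro (h | h)
            · exfalso; rw [hq] at h; simp [north, west, Prod.ext_iff] at h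
            · exfalso
              rw [hq] at h
              simp [east, west, Prod.ext_iff] at h
              have hiN2 : i = N := by omega
              subst hiN2
              omega
          · intro _; exact hwqc
        · by_cases hee : e = east (pp dir (N + 1))
          · subst hee
            constructor
            · intro _; exact heqc
            · rintro (h | h)
              · exfalso; rw [hq] at h; simp [east, south, Prod.ext_iff] at h
              · exfalso
                rw [hq] at h
                simp [east, west, Prod.ext_iff] at h
                omega
          · have heB : e ∈ insert (north (pp dir N))
                ((P.erase (west (pp dir (N + 1)))).erase (east (pp dir (N + 1)))) :=
              hmemPB e he hew hee
            by_cases hiN : i ≤ N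
            · exact hc e heB i hiN
            · have : i = N + 1 := by omega
              subst this
              constructor
              · rintro (h | h)
                · rw [h] at he; exact absurd he hnqP
                · exact absurd h hee
              · rintro (h | h)
                · rw [hsq] at h; rw [h] at he; exact absurd he hienN
                · exact absurd h hew
    · -- tile N+1 sits to the EAST of tile N
      have hq : pp dir (N + 1) = ((pp dir N).1 + 1, (pp dir N).2) := by
        rw [pp_succ, if_neg hd]
      have hienN : east (pp dir N) ∉ P := by
        intro h
        exact hint _ h (mem_interior_mk.mpr ⟨N, by omega, (if_neg hd).symm⟩)
      have hwsq : west (pp dir (N + 1)) = east (pp dir N) := by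
        rw [hq]; rfl
      have hwqP : west (pp dir (N + 1)) ∉ P := by rw [hwsq]; exact hienN
      -- candidates at the bottom-right new vertex
      have E1 : ∀ a ∈ P, (((pp dir N).1 + 2, (pp dir N).2) : Pt) ∈ ends a →
          a = south (pp dir (N + 1)) ∨ a = east (pp dir (N + 1)) := by
        intro a ha hv
        obtain ⟨i, hi, ht, hb1, hb2⟩ := edge_loc hP.1 ha hv
        replace hb1 : (i : ℤ) ≤ (pp dir N).1 + 2 + (pp dir N).2 := hb1
        replace hb2 : (pp dir N).1 + 2 + (pp dir N).2 ≤ (i : ℤ) + 2 := hb2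
        have hiN : i = N ∨ i = N + 1 := by omega
        rcases hiN with rfl | rfl
        · exfalso
          rcases tile_cases ht hv with ⟨rfl, h⟩ | ⟨rfl, h⟩ | ⟨rfl, h⟩ | ⟨rfl, h⟩ <;>
            simp [Prod.ext_iff] at h <;> all_goals omega
        · rcases tile_cases ht hv with ⟨rfl, h⟩ | ⟨rfl, h⟩ | ⟨rfl, h⟩ | ⟨rfl, h⟩
          · left; rfl
          · exfalso; rw [hq] at h; simp [Prod.ext_iff] at h; all_goals omega
          · exfalso; rw [hq] at h; simp [Prod.ext_iff] at h; all_goals omega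
          · right; rfl
      -- candidates at the top-right new vertex
      have E2 : ∀ a ∈ P, (((pp dir N).1 + 2, (pp dir N).2 + 1) : Pt) ∈ ends a →
          a = north (pp dir (N + 1)) ∨ a = east (pp dir (N + 1)) := by
        intro a ha hv
        obtain ⟨i, hi, ht, hb1, hb2⟩ := edge_loc hP.1 ha hv
        replace hb1 : (i : ℤ) ≤ (pp dir N).1 + 2 + ((pp dir N).2 + 1) := hb1
        replace hb2 : (pp dir N).1 + 2 + ((pp dir N).2 + 1) ≤ (i : ℤ) + 2 := hb2
        have hiN : i = N + 1 := by omega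
        subst hiN
        rcases tile_cases ht hv with ⟨rfl, h⟩ | ⟨rfl, h⟩ | ⟨rfl, h⟩ | ⟨rfl, h⟩
        · exfalso; rw [hq] at h; simp [Prod.ext_iff] at h; all_goals omega
        · left; rfl
        · exfalso; rw [hq] at h; simp [Prod.ext_iff] at h; all_goals omega
        · right; rfl
      have hv1mem : (((pp dir N).1 + 2, (pp dir N).2) : Pt) ∈
          (SnakeGraph.mk (N + 1) dir).vertices := by
        refine mem_vertices_mk.mpr ⟨N + 1, le_rfl, ?_⟩
        rw [mem_tileVertices, hq]; simp [Prod.ext_iff]; all_goals omega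
      have hv2mem : (((pp dir N).1 + 2, (pp dir N).2 + 1) : Pt) ∈
          (SnakeGraph.mk (N + 1) dir).vertices := by
        refine mem_vertices_mk.mpr ⟨N + 1, le_rfl, ?_⟩
        rw [mem_tileVertices, hq]; simp [Prod.ext_iff]; all_goals omega
      have hv1s : (((pp dir N).1 + 2, (pp dir N).2) : Pt) ∈ ends (south (pp dir (N + 1))) := by
        rw [mem_ends_south, hq]; simp [Prod.ext_iff]; all_goals omega
      have hv1e : (((pp dir N).1 + 2, (pp dir N).2) : Pt) ∈ ends (east (pp dir (N + 1))) := by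
        rw [mem_ends_east, hq]; simp [Prod.ext_iff]; all_goals omega
      have hv2n : (((pp dir N).1 + 2, (pp dir N).2 + 1) : Pt) ∈
          ends (north (pp dir (N + 1))) := by
        rw [mem_ends_north, hq]; simp [Prod.ext_iff]; all_goals omega
      have hv2e : (((pp dir N).1 + 2, (pp dir N).2 + 1) : Pt) ∈
          ends (east (pp dir (N + 1))) := by
        rw [mem_ends_east, hq]; simp [Prod.ext_iff]; all_goals omega
      obtain ⟨a₀, ha₀, hva₀⟩ := cover_exists hP hv1mem
      rcases E1 a₀ ha₀ hva₀ with rfl | rfl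
      · -- CASE B' : the south edge of the last tile is in P
        have heqP : east (pp dir (N + 1)) ∉ P := by
          intro heast
          have := cover_unique hP hv1mem heast hv1e ha₀ hva₀
          simp [south, east, Prod.ext_iff] at this
        obtain ⟨a₂, ha₂, hva₂⟩ := cover_exists hP hv2mem
        rcases E2 a₂ ha₂ hva₂ with rfl | rfl
        swap
        · exact absurd ha₂ heqP
        -- now: south q ∈ P (ha₀), north q ∈ P (ha₂)
        have hqse : (((pp dir N).1 + 1, (pp dir N).2) : Pt) ∈ ends (south (pp dir (N + 1))) := by
          rw [mem_ends_south, hq]; simp [Prod.ext_iff]; all_goals omega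
        have hq2ne : (((pp dir N).1 + 1, (pp dir N).2 + 1) : Pt) ∈
            ends (north (pp dir (N + 1))) := by
          rw [mem_ends_north, hq]; simp [Prod.ext_iff]; all_goals omega
        have hqeP : (((pp dir N).1 + 1, (pp dir N).2) : Pt) ∈ ends (east (pp dir N)) := by
          rw [mem_ends_east]; simp [Prod.ext_iff]; all_goals omega
        have hq2eP : (((pp dir N).1 + 1, (pp dir N).2 + 1) : Pt) ∈ ends (east (pp dir N)) := by
          rw [mem_ends_east]; simp [Prod.ext_iff]; all_goals omega
        have hqv1 : (((pp dir N).1 + 1, (pp dir N).2) : Pt) ∈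
            (SnakeGraph.mk (N + 1) dir).vertices := by
          refine mem_vertices_mk.mpr ⟨N + 1, le_rfl, ?_⟩
          rw [mem_tileVertices, hq]; simp [Prod.ext_iff]; all_goals omega
        have hqv2 : (((pp dir N).1 + 1, (pp dir N).2 + 1) : Pt) ∈
            (SnakeGraph.mk (N + 1) dir).vertices := by
          refine mem_vertices_mk.mpr ⟨N + 1, le_rfl, ?_⟩
          rw [mem_tileVertices, hq]; simp [Prod.ext_iff]; all_goals omega
        have hmemPB : ∀ e ∈ P, e ≠ south (pp dir (N + 1)) → e ≠ north (pp dir (N + 1)) →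
            e ∈ insert (east (pp dir N))
              ((P.erase (south (pp dir (N + 1)))).erase (north (pp dir (N + 1)))) := by
          intro e he h1 h2
          exact Finset.mem_insert_of_mem
            (Finset.mem_erase.mpr ⟨h2, Finset.mem_erase.mpr ⟨h1, he⟩⟩)
        have hmemPBr : ∀ e ∈ insert (east (pp dir N))
            ((P.erase (south (pp dir (N + 1)))).erase (north (pp dir (N + 1)))),
            e = east (pp dir N) ∨
            (e ∈ P ∧ e ≠ south (pp dir (N + 1)) ∧ e ≠ north (pp dir (N + 1))) := by
          intro e he
          rcases Finset.mem_insert.mp he with h | h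
          · exact Or.inl h
          · obtain ⟨h2, h3⟩ := Finset.mem_erase.mp h
            obtain ⟨h4, h5⟩ := Finset.mem_erase.mp h3
            exact Or.inr ⟨h5, h4, h2⟩
        have hnpPB : east (pp dir N) ∈ insert (east (pp dir N))
            ((P.erase (south (pp dir (N + 1)))).erase (north (pp dir (N + 1)))) :=
          Finset.mem_insert_self _ _
        have hmatchB : (SnakeGraph.mk N dir).IsPerfectMatching
            (insert (east (pp dir N))
              ((P.erase (south (pp dir (N + 1)))).erase (north (pp dir (N + 1))))) := by
          constructor
          · intro e heB
            rcases hmemPBr e heB with rfl | ⟨heP, h1, h2⟩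
            · exact mem_edges_mk.mpr ⟨N, le_rfl, by rw [mem_tileEdges]; tauto⟩
            · obtain ⟨i, hi, ht⟩ := mem_edges_mk.mp (hP.1 heP)
              by_cases hiN : i ≤ N
              · exact mem_edges_mk.mpr ⟨i, hiN, ht⟩
              · exfalso
                have : i = N + 1 := by omega
                subst this
                rcases mem_tileEdges.mp ht with rfl | rfl | rfl | rfl
                · exact h1 rfl
                · exact h2 rfl
                · exact hwqP heP
                · exact heqP heP
          · intro v hv
            have hvup : v ∈ (SnakeGraph.mk (N + 1) dir).vertices := vertices_mono hv
            have htop := vertex_top hv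
            have h1 := htop.1
            have h2 := htop.2
            by_cases hvq : v = (((pp dir N).1 + 1, (pp dir N).2) : Pt)
            · subst hvq
              apply card_cover_one hnpPB hqeP
              intro b hb hvb
              rcases hmemPBr b hb with rfl | ⟨hbP, hb1, hb2⟩
              · rfl
              · exact absurd (cover_unique hP hqv1 hbP hvb ha₀ hqse) hb1
            · by_cases hvq2 : v = (((pp dir N).1 + 1, (pp dir N).2 + 1) : Pt)
              · subst hvq2
                apply card_cover_one hnpPB hq2eP
                intro b hb hvb
                rcases hmemPBr b hb with rfl | ⟨hbP, hb1, hb2⟩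
                · rfl
                · exact absurd (cover_unique hP hqv2 hbP hvb ha₂ hq2ne) hb2
              · obtain ⟨b₀, hb₀, hvb₀⟩ := cover_exists hP hvup
                have hb₀w : b₀ ≠ south (pp dir (N + 1)) := by
                  rintro rfl
                  rw [mem_ends_south, hq] at hvb₀
                  rcases hvb₀ with rfl | rfl
                  · exact hvq rfl
                  · simp [Prod.ext_iff] at h1 h2; all_goals omega
                have hb₀e : b₀ ≠ north (pp dir (N + 1)) := by
                  rintro rfl
                  rw [mem_ends_north, hq] at hvb₀
                  rcases hvb₀ with rfl | rfl
                  · exact hvq2 rfl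
                  · simp [Prod.ext_iff] at h1 h2; all_goals omega
                apply card_cover_one (hmemPB b₀ hb₀ hb₀w hb₀e) hvb₀
                intro b hb hvb
                rcases hmemPBr b hb with rfl | ⟨hbP, hb1, hb2⟩
                · exfalso
                  rw [mem_ends_east] at hvb
                  rcases hvb with rfl | rfl
                  · exact hvq rfl
                  · exact hvq2 rfl
                · exact cover_unique hP hvup hbP hvb hb₀ hvb₀
        have hbdB : ∀ e ∈ insert (east (pp dir N))
            ((P.erase (south (pp dir (N + 1)))).erase (north (pp dir (N + 1)))),
            (SnakeGraph.mk N dir).IsBoundaryEdge e := by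
          intro e heB
          refine ⟨hmatchB.1 heB, ?_⟩
          intro hin
          obtain ⟨j, hj, hje⟩ := mem_interior_mk.mp hin
          rcases hmemPBr e heB with rfl | ⟨heP, h1, h2⟩
          · have hsj := pp_sum dir j
            by_cases hdj : dir j
            · rw [if_pos hdj] at hje
              simp [north, east, Prod.ext_iff] at hje
            · rw [if_neg hdj] at hje
              simp [east, Prod.ext_iff] at hje
              omega
          · exact hint e heP (mem_interior_mk.mpr ⟨j, by omega, hje⟩)
        obtain ⟨c, hc⟩ := IH _ hmatchB hbdB
        have hnpc : canonSign (east (pp dir N)) = c :=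
          (hc _ hnpPB N le_rfl).1 (Or.inr rfl)
        have hsqc : canonSign (south (pp dir (N + 1))) = !c := by
          rw [← hnpc, hq]
          simp only [south, east, canon_horiz, canon_vert, Bool.not_not]
          all_goals (rw [decide_eq_decide]; omega)
        have hnqc : canonSign (north (pp dir (N + 1))) = c := by
          rw [← hnpc, hq]
          simp only [north, east, canon_horiz, canon_vert]
          rw [← decide_not, decide_eq_decide]
          omega
        refine ⟨c, ?_⟩
        intro e he i hi
        have hsi := pp_sum dir i
        by_cases hew : e = south (pp dir (N + 1))
        · subst hew
          constructor
          · rintro (h | h)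
            · exfalso
              rw [hq] at h
              simp [north, south, Prod.ext_iff] at h
              have hiN2 : i = N := by omega
              subst hiN2
              omega
            · exfalso; rw [hq] at h; simp [east, south, Prod.ext_iff] at h
          · intro _; exact hsqc
        · by_cases hee : e = north (pp dir (N + 1))
          · subst hee
            constructor
            · intro _; exact hnqc
            · rintro (h | h)
              · exfalso
                rw [hq] at h
                simp [north, south, Prod.ext_iff] at h
                omega
              · exfalso; rw [hq] at h; simp [north, west, Prod.ext_iff] at h
          · have heB : e ∈ insert (east (pp dir N))
                ((P.erase (south (pp dir (N + 1)))).erase (north (pp dir (N + 1)))) :=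
              hmemPB e he hew hee
            by_cases hiN : i ≤ N
            · exact hc e heB i hiN
            · have : i = N + 1 := by omega
              subst this
              constructor
              · rintro (h | h)
                · exact absurd h hee
                · rw [h] at he; exact absurd he heqP
              · rintro (h | h)
                · exact absurd h hew
                · rw [hwsq] at h; rw [h] at he; exact absurd he hienN
      · -- CASE A' : the east edge of the last tile is in P
        have hsqP : south (pp dir (N + 1)) ∉ P := by
          intro hs
          have := cover_unique hP hv1mem hs hv1s ha₀ hva₀
          simp [south, east, Prod.ext_iff] at this
        have hnqP : north (pp dir (N + 1)) ∉ P := by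
          intro hn
          have := cover_unique hP hv2mem hn hv2n ha₀ hv2e
          simp [north, east, Prod.ext_iff] at this
        have hmatchA : (SnakeGraph.mk N dir).IsPerfectMatching
            (P.erase (east (pp dir (N + 1)))) := by
          constructor
          · intro e heA
            obtain ⟨hne, heP⟩ := Finset.mem_erase.mp heA
            obtain ⟨i, hi, ht⟩ := mem_edges_mk.mp (hP.1 heP)
            by_cases hiN : i ≤ N
            · exact mem_edges_mk.mpr ⟨i, hiN, ht⟩
            · exfalso
              have : i = N + 1 := by omega
              subst this
              rcases mem_tileEdges.mp ht with rfl | rfl | rfl | rfl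
              · exact hsqP heP
              · exact hnqP heP
              · exact hwqP heP
              · exact hne rfl
          · intro v hv
            have hvup : v ∈ (SnakeGraph.mk (N + 1) dir).vertices := vertices_mono hv
            have htop := vertex_top hv
            have h1 := htop.1
            have h2 := htop.2
            have hvne : v ∉ ends (east (pp dir (N + 1))) := by
              intro hmem
              rw [mem_ends_east, hq] at hmem
              rcases hmem with rfl | rfl <;> simp [Prod.ext_iff] at h1 h2 <;> all_goals omega
            obtain ⟨b₀, hb₀, hvb₀⟩ := cover_exists hP hvup
            have hb₀ne : b₀ ≠ east (pp dir (N + 1)) := by rintro rfl; exact hvne hvb₀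
            apply card_cover_one (Finset.mem_erase.mpr ⟨hb₀ne, hb₀⟩) hvb₀
            intro b hb hvb
            obtain ⟨hbne, hbP⟩ := Finset.mem_erase.mp hb
            exact cover_unique hP hvup hbP hvb hb₀ hvb₀
        have hbdA : ∀ e ∈ P.erase (east (pp dir (N + 1))),
            (SnakeGraph.mk N dir).IsBoundaryEdge e := by
          intro e heA
          refine ⟨hmatchA.1 heA, ?_⟩
          intro hin
          obtain ⟨j, hj, hje⟩ := mem_interior_mk.mp hin
          exact hint e (Finset.mem_erase.mp heA).2 (mem_interior_mk.mpr ⟨j, by omega, hje⟩)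
        obtain ⟨c, hc⟩ := IH _ hmatchA hbdA
        have hqv : (((pp dir N).1 + 1, (pp dir N).2) : Pt) ∈
            (SnakeGraph.mk (N + 1) dir).vertices := by
          refine mem_vertices_mk.mpr ⟨N + 1, le_rfl, ?_⟩
          rw [mem_tileVertices, hq]; simp [Prod.ext_iff]; all_goals omega
        obtain ⟨a, haP, hva⟩ := cover_exists hP hqv
        have hcanon : canonSign (east (pp dir (N + 1))) = c := by
          obtain ⟨i, hi, ht, hb1, hb2⟩ := edge_loc hP.1 haP hva
          replace hb1 : (i : ℤ) ≤ (pp dir N).1 + 1 + (pp dir N).2 := hb1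
          replace hb2 : (pp dir N).1 + 1 + (pp dir N).2 ≤ (i : ℤ) + 2 := hb2
          have hiN : i + 1 = N ∨ i = N ∨ i = N + 1 := by omega
          rcases hiN with hii | hii2 | rfl
          · -- the tile below-left
            have hN1 : N = i + 1 := by omega
            subst hN1
            have hpr := pp_succ dir i
            by_cases hdi : dir i
            · rw [if_pos hdi] at hpr
              have hin : north (pp dir i) ∉ P := by
                intro hmem
                exact hint _ hmem (mem_interior_mk.mpr ⟨i, by omega, (if_pos hdi).symm⟩)
              rcases tile_cases ht hva with ⟨rfl, h⟩ | ⟨rfl, h⟩ | ⟨rfl, h⟩ | ⟨rfl, h⟩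
              · exfalso; rw [hpr] at h; simp [Prod.ext_iff] at h; all_goals omega
              · exact absurd haP hin
              · exfalso; rw [hpr] at h; simp [Prod.ext_iff] at h; all_goals omega
              · -- a = east (tile i)
                have haPA : east (pp dir i) ∈ P.erase (east (pp dir (i + 1 + 1))) := by
                  rw [Finset.mem_erase]
                  refine ⟨?_, haP⟩
                  intro hh
                  have hsi := pp_sum dir i
                  have hsi2 := pp_sum dir (i + 1 + 1)
                  simp [east, Prod.ext_iff] at hh
                  omega
                have hnc := (hc _ haPA i (by omega)).1 (Or.inr rfl)
                rw [← hnc, hq, hpr]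
                simp only [east, canon_vert]
                rw [show ∀ a b : Bool, ((!a) = !b) ↔ (a = b) from by decide]
                rw [decide_eq_decide]
                omega
            · rw [if_neg hdi] at hpr
              exfalso
              rcases tile_cases ht hva with ⟨rfl, h⟩ | ⟨rfl, h⟩ | ⟨rfl, h⟩ | ⟨rfl, h⟩ <;>
                rw [hpr] at h <;> simp [Prod.ext_iff] at h <;> all_goals omega
          · -- the tile below
            have hii3 : N = i := hii2.symm
            subst hii3
            rcases tile_cases ht hva with ⟨rfl, h⟩ | ⟨rfl, h⟩ | ⟨rfl, h⟩ | ⟨rfl, h⟩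
            · -- a = south (tile N)
              have haPA : south (pp dir N) ∈ P.erase (east (pp dir (N + 1))) := by
                rw [Finset.mem_erase]
                exact ⟨by simp [south, east, Prod.ext_iff], haP⟩
              have hwc := (hc _ haPA N le_rfl).2 (Or.inl rfl)
              rw [show south (pp dir N) = ((pp dir N), false) from rfl, canon_horiz] at hwc
              rw [hq]
              simp only [east, canon_vert]
              have hgoal : decide (((pp dir N).1 + 1 + 1 + (pp dir N).2) % 2 = 0) =
                  decide (((pp dir N).1 + (pp dir N).2) % 2 = 0) := by
                rw [decide_eq_decide]; omega
              rw [hgoal, hwc]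
              cases c <;> rfl
            · exfalso; simp [Prod.ext_iff] at h; all_goals omega
            · exfalso; simp [Prod.ext_iff] at h; all_goals omega
            · exact absurd haP hienN
          · -- the tile itself
            exfalso
            rcases tile_cases ht hva with ⟨rfl, h⟩ | ⟨rfl, h⟩ | ⟨rfl, h⟩ | ⟨rfl, h⟩
            · exact hsqP haP
            · rw [hq] at h; simp [Prod.ext_iff] at h; all_goals omega
            · exact hwqP haP
            · rw [hq] at h; simp [Prod.ext_iff] at h; all_goals omega
        refine ⟨c, ?_⟩
        intro e he i hi
        have hsi := pp_sum dir i
        by_cases henq : e = east (pp dir (N + 1))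
        · subst henq
          constructor
          · intro _; exact hcanon
          · rintro (h | h)
            · exfalso; rw [hq] at h; simp [east, south, Prod.ext_iff] at h
            · exfalso
              rw [hq] at h
              simp [east, west, Prod.ext_iff] at h
              omega
        · have heA : e ∈ P.erase (east (pp dir (N + 1))) := Finset.mem_erase.mpr ⟨henq, he⟩
          by_cases hiN : i ≤ N
          · exact hc e heA i hiN
          · have : i = N + 1 := by omega
            subst this
            constructor
            · rintro (h | h)
              · rw [h] at he; exact absurd he hnqP
              · exact absurd h henq
            · rintro (h | h)
              · rw [h] at he; exact absurd he hsqP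
              · rw [hwsq] at h; rw [h] at he; exact absurd he hienN


/-- Lemma on signs of boundary matchings, parts (1) and (2).
Let `G` be a snake graph with sign function `f` and let `P` be a perfect matching of `G`
consisting of boundary edges only.  If `a, b ∈ P` are both north-or-east edges, or both
south-or-west edges, then `f a = f b`; if one of them is a north-or-east edge and the other
a south-or-west edge, then `f a = ! f b`. -/
theorem sign_of_boundary_matching (G : SnakeGraph) (f : Edge → Bool)
    (hf : G.IsSignFunction f) (P : Finset Edge)
    (hP : G.IsPerfectMatching P) (hbd : ∀ e ∈ P, G.IsBoundaryEdge e)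
    (a b : Edge) (ha : a ∈ P) (hb : b ∈ P) :
    (((G.IsNE a ∧ G.IsNE b) ∨ (G.IsSW a ∧ G.IsSW b)) → f a = f b) ∧
    ((G.IsNE a ∧ G.IsSW b) → f a = ! f b) := by
  obtain ⟨k, hk⟩ := sign_eq hf
  obtain ⟨N, dirG⟩ := G
  obtain ⟨c, hc⟩ := main dirG N P hP hbd
  have hfx : ∀ x ∈ P, f x = xor (canonSign x) k := by
    intro x hx
    obtain ⟨i, hi, ht⟩ := mem_edges_mk.mp (hP.1 hx)
    refine hk i hi x ?_
    rwa [pos_pp]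
  have hNE : ∀ x ∈ P, (SnakeGraph.mk N dirG).IsNE x → canonSign x = c := by
    rintro x hx ⟨i, hi, hne⟩
    refine (hc x hx i hi).1 ?_
    rwa [pos_pp] at hne
  have hSW : ∀ x ∈ P, (SnakeGraph.mk N dirG).IsSW x → canonSign x = !c := by
    rintro x hx ⟨i, hi, hsw⟩
    refine (hc x hx i hi).2 ?_
    rwa [pos_pp] at hsw
  constructor
  · rintro (⟨hna, hnb⟩ | ⟨hsa, hsb⟩)
    · rw [hfx a ha, hfx b hb, hNE a ha hna, hNE b hb hnb]
    · rw [hfx a ha, hfx b hb, hSW a ha hsa, hSW b hb hsb]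
  · rintro ⟨hna, hsb⟩
    rw [hfx a ha, hfx b hb, hNE a ha hna, hSW b hb hsb]
    cases c <;> cases k <;> rfl


end SnakeCalc
end

section
/- Let G be a snake graph with sign function f, and let P be a perfect matching of G consisting of boundary edges only. If a is a north-or-east boundary edge lying in P (or a south-or-west boundary edge not lying in P), then P consists precisely of all north-or-east boundary edges b with f(b) = f(a) together with all south-or-west boundary edges b with f(b) = −f(a). -/
namespace SnakeCalc

namespace SnakeGraph

/-- parity bit of a natural number -/
def par (i : ℕ) : Bool := decide (i % 2 = 1)

lemma par_eq {i j : ℕ} (h : i % 2 = j % 2) : par i = par j := by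
  unfold par; exact decide_eq_decide.mpr (by omega)

lemma par_neq {i j : ℕ} (h : i % 2 ≠ j % 2) : par i = !par j := by
  unfold par; rw [← decide_not]; exact decide_eq_decide.mpr (by omega)

lemma bool_eq_not {x c : Bool} : (x = !c) ↔ ¬(x = c) := by
  cases x <;> cases c <;> simp

variable (G : SnakeGraph)

lemma pos_sum (i : ℕ) : (G.pos i).1 + (G.pos i).2 = (i : ℤ) := by
  induction i with
  | zero => simp [pos]
  | succ i ih =>
      simp only [pos]
      split <;> simp <;> omega

lemma pos_nonneg (i : ℕ) : 0 ≤ (G.pos i).1 ∧ 0 ≤ (G.pos i).2 := by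
  induction i with
  | zero => simp [pos]
  | succ i ih =>
      simp only [pos]
      split <;> simp <;> omega

lemma pos_succ_true {i : ℕ} (h : G.dir i = true) :
    G.pos (i+1) = ((G.pos i).1, (G.pos i).2 + 1) := by simp [pos, h]

lemma pos_succ_false {i : ℕ} (h : G.dir i = false) :
    G.pos (i+1) = ((G.pos i).1 + 1, (G.pos i).2) := by simp [pos, h]

lemma mem_edges {e : Edge} : e ∈ G.edges ↔ ∃ i, i ≤ G.n ∧
    (e = south (G.pos i) ∨ e = north (G.pos i) ∨ e = west (G.pos i) ∨ e = east (G.pos i)) := by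
  simp [edges, tileEdges, Nat.lt_succ_iff]

lemma mem_interior {e : Edge} : e ∈ G.interiorEdges ↔ ∃ i, i < G.n ∧ e = G.ie i := by
  simp [interiorEdges, eq_comm]

lemma mem_vertices_of {i : ℕ} {v : Pt} (h : i ≤ G.n) (hv : v ∈ tileVertices (G.pos i)) :
    v ∈ G.vertices := Finset.mem_biUnion.mpr ⟨i, by simp [Nat.lt_succ_iff, h], hv⟩

lemma mem_ends {v q : Pt} {b : Bool} :
    v ∈ ends (q, b) ↔ v = q ∨ v = (if b then (q.1, q.2+1) else (q.1+1, q.2)) := by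
  simp [ends]

end SnakeGraph

namespace SnakeGraph

lemma bool_resolve {x c : Bool} (h : ¬ x = !c) : x = c := by
  cases x <;> cases c <;> simp_all

lemma bool_resolve' {x c : Bool} (h : ¬ x = c) : x = !c := by
  cases x <;> cases c <;> simp_all

lemma bool_contra {x c : Bool} (h1 : x = c) (h2 : x = !c) : False := by
  subst h1; cases x <;> simp at h2

lemma pos_ne (G : SnakeGraph) {i j : ℕ} (h : i ≠ j) : G.pos i ≠ G.pos j := by
  intro hh
  have si := G.pos_sum i
  have sj := G.pos_sum j
  rw [hh] at si
  omega

end SnakeGraph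

lemma SnakeGraph.bool_not_swap {x y : Bool} (h : x = !y) : y = !x := by
  rw [h, Bool.not_not]

namespace SnakeGraph

lemma ends_south (p : Pt) : ends (south p) = ({p, (p.1+1, p.2)} : Finset Pt) := by
  simp [ends, south]

lemma ends_north (p : Pt) : ends (north p) = ({(p.1, p.2+1), (p.1+1, p.2+1)} : Finset Pt) := by
  simp [ends, north]

lemma ends_west (p : Pt) : ends (west p) = ({p, (p.1, p.2+1)} : Finset Pt) := by
  simp [ends, west]

lemma ends_east (p : Pt) : ends (east p) = ({(p.1+1, p.2), (p.1+1, p.2+1)} : Finset Pt) := by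
  simp [ends, east]

variable (G : SnakeGraph)

lemma pos_zero : G.pos 0 = ((0:ℤ), (0:ℤ)) := rfl

/-- Edges of `G` incident to the origin corner. -/
lemma incA0 {e : Edge} (he : e ∈ G.edges) (hv : G.pos 0 ∈ ends e) :
    e = south (G.pos 0) ∨ e = west (G.pos 0) := by
  obtain ⟨j, hj, hrole⟩ := G.mem_edges.mp he
  have hsj := G.pos_sum j
  have hnj := G.pos_nonneg j
  rcases hrole with rfl | rfl | rfl | rfl
  · rw [ends_south, pos_zero] at hv
    simp only [Finset.mem_insert, Finset.mem_singleton, Prod.ext_iff] at hv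
    have hj0 : j = 0 := by omega
    subst hj0; left; rfl
  · rw [ends_north, pos_zero] at hv
    simp only [Finset.mem_insert, Finset.mem_singleton, Prod.ext_iff] at hv
    exfalso; omega
  · rw [ends_west, pos_zero] at hv
    simp only [Finset.mem_insert, Finset.mem_singleton, Prod.ext_iff] at hv
    have hj0 : j = 0 := by omega
    subst hj0; right; rfl
  · rw [ends_east, pos_zero] at hv
    simp only [Finset.mem_insert, Finset.mem_singleton, Prod.ext_iff] at hv
    exfalso; omega

end SnakeGraph

namespace SnakeGraph

variable (G : SnakeGraph)

lemma dir_true_of {i : ℕ} (h1 : (G.pos (i+1)).1 = (G.pos i).1) : G.dir i = true := by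
  cases hd : G.dir i
  · rw [G.pos_succ_false hd] at h1; exfalso; simp at h1
  · rfl

lemma dir_false_of {i : ℕ} (h1 : (G.pos (i+1)).2 = (G.pos i).2) : G.dir i = false := by
  cases hd : G.dir i
  · rfl
  · rw [G.pos_succ_true hd] at h1; exfalso; simp at h1

/-- Edges of `G` incident to the northwest corner of tile `i`. -/
lemma incC {i : ℕ} {e : Edge} (he : e ∈ G.edges)
    (hv : ((G.pos i).1, (G.pos i).2 + 1) ∈ ends e) :
    e = north (G.pos i) ∨ e = west (G.pos i) ∨
    (i + 1 ≤ G.n ∧ G.dir i = true ∧ e = west (G.pos (i+1))) ∨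
    (1 ≤ i ∧ G.dir (i-1) = false ∧ e = north (G.pos (i-1))) := by
  obtain ⟨j, hj, hrole⟩ := G.mem_edges.mp he
  have hsj := G.pos_sum j
  have hsi := G.pos_sum i
  rcases hrole with rfl | rfl | rfl | rfl
  · rw [ends_south] at hv
    simp only [Finset.mem_insert, Finset.mem_singleton, Prod.ext_iff] at hv
    rcases hv with ⟨h1, h2⟩ | ⟨h1, h2⟩
    · have hji : j = i + 1 := by omega
      subst hji
      have hd : G.dir i = true := G.dir_true_of (by omega)
      left
      rw [north, south, G.pos_succ_true hd]
    · exfalso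
      have hji : j = i := by omega
      subst hji; omega
  · rw [ends_north] at hv
    simp only [Finset.mem_insert, Finset.mem_singleton, Prod.ext_iff] at hv
    rcases hv with ⟨h1, h2⟩ | ⟨h1, h2⟩
    · have hji : j = i := by omega
      subst hji; left; rfl
    · have hji : j = i - 1 ∧ 1 ≤ i := by omega
      obtain ⟨hji, h1i⟩ := hji
      right; right; right
      refine ⟨h1i, ?_, ?_⟩
      · apply G.dir_false_of
        rw [show i - 1 = j from hji.symm, show j + 1 = i from by omega]
        omega
      · rw [hji]
  · rw [ends_west] at hv
    simp only [Finset.mem_insert, Finset.mem_singleton, Prod.ext_iff] at hv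
    rcases hv with ⟨h1, h2⟩ | ⟨h1, h2⟩
    · have hji : j = i + 1 := by omega
      subst hji
      have hd : G.dir i = true := G.dir_true_of (by omega)
      right; right; left
      exact ⟨hj, hd, rfl⟩
    · have hji : j = i := by omega
      subst hji; right; left; rfl
  · rw [ends_east] at hv
    simp only [Finset.mem_insert, Finset.mem_singleton, Prod.ext_iff] at hv
    rcases hv with ⟨h1, h2⟩ | ⟨h1, h2⟩
    · exfalso
      have hji : j = i := by omega
      subst hji; omega
    · have hji : j = i - 1 ∧ 1 ≤ i := by omega
      obtain ⟨hji, h1i⟩ := hji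
      have hd : G.dir j = false := G.dir_false_of (by
        rw [show j + 1 = i from by omega]; omega)
      right; left
      have hp : G.pos i = ((G.pos j).1 + 1, (G.pos j).2) := by
        rw [show i = j + 1 by omega]; exact G.pos_succ_false hd
      rw [west, east, hp]

end SnakeGraph

namespace SnakeGraph

variable (G : SnakeGraph)

/-- Edges of `G` incident to the southeast corner of tile `i`. -/
lemma incB {i : ℕ} {e : Edge} (he : e ∈ G.edges)
    (hv : ((G.pos i).1 + 1, (G.pos i).2) ∈ ends e) :
    e = south (G.pos i) ∨ e = east (G.pos i) ∨
    (i + 1 ≤ G.n ∧ G.dir i = false ∧ e = south (G.pos (i+1))) ∨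
    (1 ≤ i ∧ G.dir (i-1) = true ∧ e = east (G.pos (i-1))) := by
  obtain ⟨j, hj, hrole⟩ := G.mem_edges.mp he
  have hsj := G.pos_sum j
  have hsi := G.pos_sum i
  rcases hrole with rfl | rfl | rfl | rfl
  · rw [ends_south] at hv
    simp only [Finset.mem_insert, Finset.mem_singleton, Prod.ext_iff] at hv
    rcases hv with ⟨h1, h2⟩ | ⟨h1, h2⟩
    · have hji : j = i + 1 := by omega
      subst hji
      have hd : G.dir i = false := G.dir_false_of (by omega)
      right; right; left
      exact ⟨hj, hd, rfl⟩
    · have hji : j = i := by omega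
      subst hji; left; rfl
  · rw [ends_north] at hv
    simp only [Finset.mem_insert, Finset.mem_singleton, Prod.ext_iff] at hv
    rcases hv with ⟨h1, h2⟩ | ⟨h1, h2⟩
    · exfalso
      have hji : j = i := by omega
      subst hji; omega
    · have hji : j = i - 1 ∧ 1 ≤ i := by omega
      obtain ⟨hji, h1i⟩ := hji
      have hd : G.dir j = true := G.dir_true_of (by
        rw [show j + 1 = i from by omega]; omega)
      left
      have hp : G.pos i = ((G.pos j).1, (G.pos j).2 + 1) := by
        rw [show i = j + 1 by omega]; exact G.pos_succ_true hd
      rw [north, south, hp]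
  · rw [ends_west] at hv
    simp only [Finset.mem_insert, Finset.mem_singleton, Prod.ext_iff] at hv
    rcases hv with ⟨h1, h2⟩ | ⟨h1, h2⟩
    · have hji : j = i + 1 := by omega
      subst hji
      have hd : G.dir i = false := G.dir_false_of (by omega)
      right; left
      rw [west, east, G.pos_succ_false hd]
    · exfalso
      have hji : j = i := by omega
      subst hji; omega
  · rw [ends_east] at hv
    simp only [Finset.mem_insert, Finset.mem_singleton, Prod.ext_iff] at hv
    rcases hv with ⟨h1, h2⟩ | ⟨h1, h2⟩
    · have hji : j = i := by omega
      subst hji; right; left; rfl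
    · have hji : j = i - 1 ∧ 1 ≤ i := by omega
      obtain ⟨hji, h1i⟩ := hji
      have hd : G.dir (i-1) = true := by
        rw [show i - 1 = j from hji.symm]
        exact G.dir_true_of (by rw [show j + 1 = i from by omega]; omega)
      right; right; right
      exact ⟨h1i, hd, by rw [hji]⟩

end SnakeGraph

namespace SnakeGraph

variable (G : SnakeGraph)

lemma match_unique {P : Finset Edge} (hP : G.IsPerfectMatching P) {v : Pt} {e₁ e₂ : Edge}
    (hv : v ∈ G.vertices) (h1 : e₁ ∈ P) (h2 : e₂ ∈ P)
    (m1 : v ∈ ends e₁) (m2 : v ∈ ends e₂) : e₁ = e₂ := by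
  have hc := hP.2 v hv
  obtain ⟨x, hx⟩ := Finset.card_eq_one.mp hc
  have a1 : e₁ ∈ P.filter fun e => v ∈ ends e := Finset.mem_filter.mpr ⟨h1, m1⟩
  have a2 : e₂ ∈ P.filter fun e => v ∈ ends e := Finset.mem_filter.mpr ⟨h2, m2⟩
  rw [hx, Finset.mem_singleton] at a1 a2
  rw [a1, a2]

lemma match_exists {P : Finset Edge} (hP : G.IsPerfectMatching P) {v : Pt}
    (hv : v ∈ G.vertices) : ∃ e ∈ P, v ∈ ends e := by
  have hc := hP.2 v hv
  obtain ⟨x, hx⟩ := Finset.card_eq_one.mp hc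
  have : x ∈ P.filter fun e => v ∈ ends e := by rw [hx]; exact Finset.mem_singleton_self x
  rw [Finset.mem_filter] at this
  exact ⟨x, this.1, this.2⟩

/-- Vertices of interest. -/
lemma cornerA_mem {i : ℕ} (hi : i ≤ G.n) : G.pos i ∈ G.vertices :=
  G.mem_vertices_of hi (by simp [tileVertices])

lemma cornerB_mem {i : ℕ} (hi : i ≤ G.n) : ((G.pos i).1 + 1, (G.pos i).2) ∈ G.vertices :=
  G.mem_vertices_of hi (by simp [tileVertices])

lemma cornerC_mem {i : ℕ} (hi : i ≤ G.n) : ((G.pos i).1, (G.pos i).2 + 1) ∈ G.vertices :=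
  G.mem_vertices_of hi (by simp [tileVertices])

/-- Interior edges. -/
lemma north_interior {i : ℕ} (h : i < G.n) (hd : G.dir i = true) :
    north (G.pos i) ∈ G.interiorEdges := G.mem_interior.mpr ⟨i, h, by simp [ie, hd]⟩

lemma east_interior {i : ℕ} (h : i < G.n) (hd : G.dir i = false) :
    east (G.pos i) ∈ G.interiorEdges := G.mem_interior.mpr ⟨i, h, by simp [ie, hd]⟩

lemma south_succ_eq {i : ℕ} (hd : G.dir i = true) :
    south (G.pos (i+1)) = north (G.pos i) := by
  rw [south, north, G.pos_succ_true hd]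

lemma west_succ_eq {i : ℕ} (hd : G.dir i = false) :
    west (G.pos (i+1)) = east (G.pos i) := by
  rw [west, east, G.pos_succ_false hd]

/-- Edges of a tile are in `G.edges`. -/
lemma south_mem {i : ℕ} (hi : i ≤ G.n) : south (G.pos i) ∈ G.edges :=
  G.mem_edges.mpr ⟨i, hi, Or.inl rfl⟩
lemma north_mem {i : ℕ} (hi : i ≤ G.n) : north (G.pos i) ∈ G.edges :=
  G.mem_edges.mpr ⟨i, hi, Or.inr (Or.inl rfl)⟩
lemma west_mem {i : ℕ} (hi : i ≤ G.n) : west (G.pos i) ∈ G.edges :=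
  G.mem_edges.mpr ⟨i, hi, Or.inr (Or.inr (Or.inl rfl))⟩
lemma east_mem {i : ℕ} (hi : i ≤ G.n) : east (G.pos i) ∈ G.edges :=
  G.mem_edges.mpr ⟨i, hi, Or.inr (Or.inr (Or.inr rfl))⟩

/-- canonical signs of the four edges of tile `i`. -/
lemma cs_south (i : ℕ) : canonSign (south (G.pos i)) = !par i := by
  have h := G.pos_sum i
  simp only [canonSign, south, par]
  simp only [Bool.false_eq_true, ↓reduceIte]
  rw [← decide_not]
  exact decide_eq_decide.mpr (by omega)

lemma cs_north (i : ℕ) : canonSign (north (G.pos i)) = par i := by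
  have h := G.pos_sum i
  simp only [canonSign, north, par]
  simp only [Bool.false_eq_true, ↓reduceIte]
  exact decide_eq_decide.mpr (by omega)

lemma cs_west (i : ℕ) : canonSign (west (G.pos i)) = par i := by
  have h := G.pos_sum i
  simp only [canonSign, west, par]
  rw [if_pos trivial]
  exact decide_eq_decide.mpr (by omega)

lemma cs_east (i : ℕ) : canonSign (east (G.pos i)) = !par i := by
  have h := G.pos_sum i
  simp only [canonSign, east, par]
  rw [if_pos trivial, ← decide_not]
  exact decide_eq_decide.mpr (by omega)

end SnakeGraph

namespace SnakeGraph

variable (G : SnakeGraph)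

lemma bool_xor_cancel {w x y z : Bool} (h : xor w x = xor y z) : (w = y ↔ x = z) := by
  cases w <;> cases x <;> cases y <;> cases z <;> simp_all

lemma f_south_step {f : Edge → Bool} (hf : G.IsSignFunction f) {i : ℕ} (hi : i + 1 ≤ G.n) :
    f (south (G.pos (i+1))) = ! f (south (G.pos i)) := by
  have H := hf i (by omega)
  have H1 := hf (i+1) hi
  cases hd : G.dir i
  · have hw : west (G.pos (i+1)) = east (G.pos i) := G.west_succ_eq hd
    have h1 : f (west (G.pos (i+1))) = ! f (south (G.pos (i+1))) := by
      rw [← H1.1]; exact H1.2.2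
    rw [hw, ← H.2.1] at h1
    cases hfs : f (south (G.pos i)) <;> cases hft : f (south (G.pos (i+1))) <;> simp_all
  · rw [G.south_succ_eq hd]
    exact H.2.2

lemma f_south_par {f : Edge → Bool} (hf : G.IsSignFunction f) :
    ∀ i, i ≤ G.n → f (south (G.pos i)) = xor (f (south (G.pos 0))) (par i) := by
  intro i
  induction i with
  | zero => intro _; simp [par]
  | succ i ih =>
      intro hi
      rw [G.f_south_step hf hi, ih (by omega), par_neq (show (i+1) % 2 ≠ i % 2 by omega)]
      cases f (south (G.pos 0)) <;> cases par i <;> simp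

lemma f_vs_canon {f : Edge → Bool} (hf : G.IsSignFunction f) :
    ∀ e ∈ G.edges, xor (f e) (canonSign e) = xor (f (south (G.pos 0))) true := by
  intro e he
  obtain ⟨i, hi, hrole⟩ := G.mem_edges.mp he
  have H := hf i hi
  have hs := G.f_south_par hf i hi
  rcases hrole with rfl | rfl | rfl | rfl
  · rw [G.cs_south, hs]
    cases f (south (G.pos 0)) <;> cases par i <;> simp
  · rw [G.cs_north, show f (north (G.pos i)) = ! f (south (G.pos i)) from H.2.2, hs]
    cases f (south (G.pos 0)) <;> cases par i <;> simp
  · rw [G.cs_west, show f (west (G.pos i)) = ! f (south (G.pos i)) by rw [← H.1]; exact H.2.2, hs]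
    cases f (south (G.pos 0)) <;> cases par i <;> simp
  · rw [G.cs_east, ← H.2.1, hs]
    cases f (south (G.pos 0)) <;> cases par i <;> simp

lemma f_cmp {f : Edge → Bool} (hf : G.IsSignFunction f) {b a : Edge}
    (hb : b ∈ G.edges) (ha : a ∈ G.edges) :
    (f b = f a ↔ canonSign b = canonSign a) := by
  have h1 := G.f_vs_canon hf b hb
  have h2 := G.f_vs_canon hf a ha
  exact bool_xor_cancel (h1.trans h2.symm)

end SnakeGraph

namespace SnakeGraph

def Sb (G : SnakeGraph) (i : ℕ) : Prop := i = 0 ∨ G.dir (i-1) = false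
def Wb (G : SnakeGraph) (i : ℕ) : Prop := i = 0 ∨ G.dir (i-1) = true
def Nb (G : SnakeGraph) (i : ℕ) : Prop := i = G.n ∨ G.dir i = false
def Eb (G : SnakeGraph) (i : ℕ) : Prop := i = G.n ∨ G.dir i = true

variable (G : SnakeGraph)

lemma main {P : Finset Edge} (hP : G.IsPerfectMatching P) (hbd : ∀ e ∈ P, G.IsBoundaryEdge e)
    (c : Bool) (hc : west (G.pos 0) ∈ P ↔ c = true) :
    ∀ i, i ≤ G.n →
      (south (G.pos i) ∈ P ↔ (G.Sb i ∧ par i = c)) ∧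
      (west (G.pos i) ∈ P ↔ (G.Wb i ∧ par i = !c)) ∧
      (north (G.pos i) ∈ P ↔ (G.Nb i ∧ par i = c)) ∧
      (east (G.pos i) ∈ P ↔ (G.Eb i ∧ par i = !c)) := by
  have hnotint : ∀ e ∈ P, e ∉ G.interiorEdges := fun e he => (hbd e he).2
  intro i
  induction i using Nat.strong_induction_on with
  | _ i IH =>
  intro hi
  obtain _ | k := i
  · -- base case, tile 0
    have hvA : G.pos 0 ∈ G.vertices := G.cornerA_mem (Nat.zero_le _)
    have hA0 : (south (G.pos 0) ∈ P ↔ c = false) ∧ (west (G.pos 0) ∈ P ↔ c = true) := by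
      cases hc0 : c
      · have hW : west (G.pos 0) ∉ P := by rw [hc, hc0]; simp
        obtain ⟨e, heP, hev⟩ := G.match_exists hP hvA
        rcases G.incA0 (hP.1 heP) hev with rfl | rfl
        · exact ⟨by simp [heP], by simp [hW]⟩
        · exact absurd heP hW
      · have hW : west (G.pos 0) ∈ P := hc.mpr hc0
        have hS : south (G.pos 0) ∉ P := by
          intro hs
          have hms : G.pos 0 ∈ ends (south (G.pos 0)) := by rw [ends_south]; simp
          have hmw : G.pos 0 ∈ ends (west (G.pos 0)) := by rw [ends_west]; simp
          have := G.match_unique hP hvA hs hW hms hmw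
          simp [south, west] at this
        exact ⟨by simp [hS], by simp [hW]⟩
    have hN0 : north (G.pos 0) ∈ P ↔ (G.Nb 0 ∧ c = false) := by
      by_cases hnb : G.Nb 0
      · have hvC : ((G.pos 0).1, (G.pos 0).2 + 1) ∈ G.vertices := G.cornerC_mem (Nat.zero_le _)
        have hmN : ((G.pos 0).1, (G.pos 0).2 + 1) ∈ ends (north (G.pos 0)) := by
          rw [ends_north]; simp
        have hmW : ((G.pos 0).1, (G.pos 0).2 + 1) ∈ ends (west (G.pos 0)) := by
          rw [ends_west]; simp
        cases hc0 : c
        · have hW : west (G.pos 0) ∉ P := by rw [hc, hc0]; simp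
          obtain ⟨e, heP, hev⟩ := G.match_exists hP hvC
          rcases G.incC (hP.1 heP) hev with rfl | rfl | ⟨hg1, hg2, rfl⟩ | ⟨hg1, hg2, rfl⟩
          · simp [heP, hnb]
          · exact absurd heP hW
          · exfalso; rcases hnb with h | h
            · omega
            · rw [h] at hg2; simp at hg2
          · omega
        · have hW : west (G.pos 0) ∈ P := hc.mpr hc0
          constructor
          · intro hn
            have := G.match_unique hP hvC hn hW hmN hmW
            simp [north, west] at this
          · rintro ⟨-, h⟩; simp at h
      · have hd0 : G.dir 0 = true := by
          rcases Bool.eq_false_or_eq_true (G.dir 0) with h | h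
          · exact h
          · exact absurd (Or.inr h : G.Nb 0) hnb
        have hn0 : (0:ℕ) < G.n := by
          rcases Nat.eq_zero_or_pos G.n with h | h
          · exact absurd (Or.inl h.symm : G.Nb 0) hnb
          · exact h
        have hint : north (G.pos 0) ∈ G.interiorEdges := G.north_interior hn0 hd0
        simp only [iff_def]
        constructor
        · intro h; exact absurd hint (hnotint _ h)
        · rintro ⟨h, -⟩; exact absurd h hnb
    have hE0 : east (G.pos 0) ∈ P ↔ (G.Eb 0 ∧ c = true) := by
      by_cases heb : G.Eb 0
      · have hvB : ((G.pos 0).1 + 1, (G.pos 0).2) ∈ G.vertices := G.cornerB_mem (Nat.zero_le _)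
        have hmE : ((G.pos 0).1 + 1, (G.pos 0).2) ∈ ends (east (G.pos 0)) := by
          rw [ends_east]; simp
        have hmS : ((G.pos 0).1 + 1, (G.pos 0).2) ∈ ends (south (G.pos 0)) := by
          rw [ends_south]; simp
        cases hc0 : c
        · have hS : south (G.pos 0) ∈ P := hA0.1.mpr hc0
          constructor
          · intro hn
            have := G.match_unique hP hvB hn hS hmE hmS
            simp [south, east] at this
          · rintro ⟨-, h⟩; simp at h
        · have hS : south (G.pos 0) ∉ P := by rw [hA0.1, hc0]; simp
          obtain ⟨e, heP, hev⟩ := G.match_exists hP hvB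
          rcases G.incB (hP.1 heP) hev with rfl | rfl | ⟨hg1, hg2, rfl⟩ | ⟨hg1, hg2, rfl⟩
          · exact absurd heP hS
          · simp [heP, heb]
          · exfalso; rcases heb with h | h
            · omega
            · rw [h] at hg2; simp at hg2
          · omega
      · have hd0 : G.dir 0 = false := by
          rcases Bool.eq_false_or_eq_true (G.dir 0) with h | h
          · exact absurd (Or.inr h : G.Eb 0) heb
          · exact h
        have hn0 : (0:ℕ) < G.n := by
          rcases Nat.eq_zero_or_pos G.n with h | h
          · exact absurd (Or.inl h.symm : G.Eb 0) heb
          · exact h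
        have hint : east (G.pos 0) ∈ G.interiorEdges := G.east_interior hn0 hd0
        simp only [iff_def]
        constructor
        · intro h; exact absurd hint (hnotint _ h)
        · rintro ⟨h, -⟩; exact absurd h heb
    refine ⟨?_, ?_, ?_, ?_⟩
    · rw [hA0.1]; cases c <;> simp [Sb, par]
    · rw [hA0.2]; cases c <;> simp [Wb, par]
    · rw [hN0]; cases c <;> simp [par]
    · rw [hE0]; cases c <;> simp [par]
  · -- step case, tile k+1
    have hkn : k < G.n := by omega
    have hkk : k ≤ G.n := by omega
    have IHk := IH k (by omega) hkk
    have hrel1 : par (k+1) = !par k := par_neq (by omega)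
    cases hd : G.dir k with
    | true =>
      -- south edge of tile k+1 is interior
      have hSint : south (G.pos (k+1)) ∈ G.interiorEdges := by
        rw [G.south_succ_eq hd]; exact G.north_interior hkn hd
      have hS : south (G.pos (k+1)) ∈ P ↔ (G.Sb (k+1) ∧ par (k+1) = c) := by
        constructor
        · intro h; exact absurd hSint (hnotint _ h)
        · rintro ⟨hsb, -⟩
          exfalso
          rcases hsb with h | h
          · omega
          · rw [Nat.add_sub_cancel, hd] at h; simp at h
      -- west edge of tile k+1, determined at corner C of tile k
      have hwb : G.Wb (k+1) := Or.inr (by rw [Nat.add_sub_cancel]; exact hd)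
      have hvC : ((G.pos k).1, (G.pos k).2 + 1) ∈ G.vertices := G.cornerC_mem hkk
      have hmW1 : ((G.pos k).1, (G.pos k).2 + 1) ∈ ends (west (G.pos (k+1))) := by
        rw [ends_west, G.pos_succ_true hd]; simp
      have hW : west (G.pos (k+1)) ∈ P ↔ (G.Wb (k+1) ∧ par (k+1) = !c) := by
        by_cases hpar : par (k+1) = !c
        · obtain ⟨e, heP, hev⟩ := G.match_exists hP hvC
          rcases G.incC (hP.1 heP) hev with rfl | rfl | ⟨hg1, hg2, rfl⟩ | ⟨hg1, hg2, rfl⟩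
          · exact absurd (G.north_interior hkn hd) (hnotint _ heP)
          · exfalso
            have h1 := IHk.2.1.mp heP
            rw [h1.2] at hrel1
            rw [hpar] at hrel1
            cases c <;> simp at hrel1
          · simp [heP, hwb, hpar]
          · exfalso
            have h1 := (IH (k-1) (by omega) (by omega)).2.2.1.mp heP
            have h2 : par (k-1) = par (k+1) := par_eq (by omega)
            rw [h1.2, hpar] at h2
            cases c <;> simp at h2
        · have hW1 : west (G.pos (k+1)) ∉ P := by
            intro hmem
            rcases Nat.eq_zero_or_pos k with hk0 | hk1
            · subst hk0
              have hc1 : c = true := by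
                have := bool_resolve hpar
                simpa [par] using this.symm
              have hcW0 : west (G.pos 0) ∈ P := hc.mpr hc1
              have hmW0 : ((G.pos 0).1, (G.pos 0).2 + 1) ∈ ends (west (G.pos 0)) := by
                rw [ends_west]; simp
              have heq := G.match_unique hP hvC hmem hcW0 hmW1 hmW0
              simp only [west, Prod.mk.injEq] at heq
              exact G.pos_ne (show 0+1 ≠ 0 by omega) heq.1
            · by_cases hd1 : G.dir (k-1) = true
              · have hWk : west (G.pos k) ∈ P := by
                  apply IHk.2.1.mpr
                  refine ⟨Or.inr hd1, ?_⟩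
                  have h1 : par k = !par (k+1) := bool_not_swap hrel1
                  rw [h1, bool_resolve hpar]
                have hmWk : ((G.pos k).1, (G.pos k).2 + 1) ∈ ends (west (G.pos k)) := by
                  rw [ends_west]; simp
                have heq := G.match_unique hP hvC hmem hWk hmW1 hmWk
                simp only [west, Prod.mk.injEq] at heq
                exact G.pos_ne (show k+1 ≠ k by omega) heq.1
              · have hd1f : G.dir (k-1) = false := by
                  rcases Bool.eq_false_or_eq_true (G.dir (k-1)) with h | h
                  · exact absurd h hd1
                  · exact h
                have hNk1 : north (G.pos (k-1)) ∈ P := by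
                  apply (IH (k-1) (by omega) (by omega)).2.2.1.mpr
                  refine ⟨Or.inr hd1f, ?_⟩
                  have hx := bool_resolve hpar
                  have h2 : par (k-1) = par (k+1) := par_eq (by omega)
                  rw [hx] at h2; exact h2
                have hpk : G.pos k = ((G.pos (k-1)).1 + 1, (G.pos (k-1)).2) := by
                  conv_lhs => rw [show k = (k-1)+1 by omega]
                  exact G.pos_succ_false hd1f
                have hmNk1 : ((G.pos k).1, (G.pos k).2 + 1) ∈ ends (north (G.pos (k-1))) := by
                  rw [ends_north, hpk]; simp
                have heq := G.match_unique hP hvC hmem hNk1 hmW1 hmNk1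
                simp [west, north] at heq
          simp [hW1, hpar]
      -- north edge of tile k+1, determined at corner C of tile k+1
      have hN : north (G.pos (k+1)) ∈ P ↔ (G.Nb (k+1) ∧ par (k+1) = c) := by
        by_cases hnb : G.Nb (k+1)
        · have hvC1 : ((G.pos (k+1)).1, (G.pos (k+1)).2 + 1) ∈ G.vertices := G.cornerC_mem hi
          have hmN : ((G.pos (k+1)).1, (G.pos (k+1)).2 + 1) ∈ ends (north (G.pos (k+1))) := by
            rw [ends_north]; simp
          by_cases hpar : par (k+1) = c
          · obtain ⟨e, heP, hev⟩ := G.match_exists hP hvC1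
            rcases G.incC (hP.1 heP) hev with rfl | rfl | ⟨hg1, hg2, rfl⟩ | ⟨hg1, hg2, rfl⟩
            · simp [heP, hnb, hpar]
            · exfalso
              have h1 := hW.mp heP
              exact bool_contra hpar h1.2
            · exfalso
              rcases hnb with h | h
              · omega
              · rw [h] at hg2; simp at hg2
            · exfalso
              rw [Nat.add_sub_cancel, hd] at hg2; simp at hg2
          · have hWk1 : west (G.pos (k+1)) ∈ P := hW.mpr ⟨hwb, bool_resolve' hpar⟩
            have hmWk1 : ((G.pos (k+1)).1, (G.pos (k+1)).2 + 1) ∈ ends (west (G.pos (k+1))) := by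
              rw [ends_west]; simp
            have hN1 : north (G.pos (k+1)) ∉ P := by
              intro hmem
              have heq := G.match_unique hP hvC1 hmem hWk1 hmN hmWk1
              simp [north, west] at heq
            simp [hN1, hpar]
        · have hd1 : G.dir (k+1) = true := by
            rcases Bool.eq_false_or_eq_true (G.dir (k+1)) with h | h
            · exact h
            · exact absurd (Or.inr h : G.Nb (k+1)) hnb
          have hn1 : k+1 < G.n := by
            rcases Nat.lt_or_ge (k+1) G.n with h | h
            · exact h
            · exact absurd (Or.inl (by omega) : G.Nb (k+1)) hnb
          have hint : north (G.pos (k+1)) ∈ G.interiorEdges := G.north_interior hn1 hd1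
          constructor
          · intro h; exact absurd hint (hnotint _ h)
          · rintro ⟨h, -⟩; exact absurd h hnb
      -- east edge of tile k+1, determined at corner B of tile k+1
      have hE : east (G.pos (k+1)) ∈ P ↔ (G.Eb (k+1) ∧ par (k+1) = !c) := by
        by_cases heb : G.Eb (k+1)
        · have hvB1 : ((G.pos (k+1)).1 + 1, (G.pos (k+1)).2) ∈ G.vertices := G.cornerB_mem hi
          have hmE : ((G.pos (k+1)).1 + 1, (G.pos (k+1)).2) ∈ ends (east (G.pos (k+1))) := by
            rw [ends_east]; simp
          by_cases hpar : par (k+1) = !c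
          · obtain ⟨e, heP, hev⟩ := G.match_exists hP hvB1
            rcases G.incB (hP.1 heP) hev with rfl | rfl | ⟨hg1, hg2, rfl⟩ | ⟨hg1, hg2, rfl⟩
            · exact absurd hSint (hnotint _ heP)
            · simp [heP, heb, hpar]
            · exfalso
              rcases heb with h | h
              · omega
              · rw [h] at hg2; simp at hg2
            · exfalso
              rw [Nat.add_sub_cancel] at heP
              have h1 := IHk.2.2.2.mp heP
              rw [h1.2] at hrel1
              rw [hpar] at hrel1
              cases c <;> simp at hrel1
          · have hEk : east (G.pos k) ∈ P := by
              apply IHk.2.2.2.mpr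
              refine ⟨Or.inr hd, ?_⟩
              have h1 : par k = !par (k+1) := bool_not_swap hrel1
              rw [h1, bool_resolve hpar]
            have hmEk : ((G.pos (k+1)).1 + 1, (G.pos (k+1)).2) ∈ ends (east (G.pos k)) := by
              rw [ends_east, G.pos_succ_true hd]; simp
            have hE1 : east (G.pos (k+1)) ∉ P := by
              intro hmem
              have heq := G.match_unique hP hvB1 hmem hEk hmE hmEk
              simp only [east, Prod.mk.injEq] at heq
              obtain ⟨⟨t1, t2⟩, -⟩ := heq
              have s1 := G.pos_sum (k+1)
              have s2 := G.pos_sum k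
              omega
            simp [hE1, hpar]
        · have hd1 : G.dir (k+1) = false := by
            rcases Bool.eq_false_or_eq_true (G.dir (k+1)) with h | h
            · exact absurd (Or.inr h : G.Eb (k+1)) heb
            · exact h
          have hn1 : k+1 < G.n := by
            rcases Nat.lt_or_ge (k+1) G.n with h | h
            · exact h
            · exact absurd (Or.inl (by omega) : G.Eb (k+1)) heb
          have hint : east (G.pos (k+1)) ∈ G.interiorEdges := G.east_interior hn1 hd1
          constructor
          · intro h; exact absurd hint (hnotint _ h)
          · rintro ⟨h, -⟩; exact absurd h heb
      exact ⟨hS, hW, hN, hE⟩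
    | false =>
      -- west edge of tile k+1 is interior
      have hWint : west (G.pos (k+1)) ∈ G.interiorEdges := by
        rw [G.west_succ_eq hd]; exact G.east_interior hkn hd
      have hW : west (G.pos (k+1)) ∈ P ↔ (G.Wb (k+1) ∧ par (k+1) = !c) := by
        constructor
        · intro h; exact absurd hWint (hnotint _ h)
        · rintro ⟨hwb, -⟩
          exfalso
          rcases hwb with h | h
          · omega
          · rw [Nat.add_sub_cancel, hd] at h; simp at h
      -- south edge of tile k+1, determined at corner B of tile k
      have hsb : G.Sb (k+1) := Or.inr (by rw [Nat.add_sub_cancel]; exact hd)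
      have hvB : ((G.pos k).1 + 1, (G.pos k).2) ∈ G.vertices := G.cornerB_mem hkk
      have hmS1 : ((G.pos k).1 + 1, (G.pos k).2) ∈ ends (south (G.pos (k+1))) := by
        rw [ends_south, G.pos_succ_false hd]; simp
      have hS : south (G.pos (k+1)) ∈ P ↔ (G.Sb (k+1) ∧ par (k+1) = c) := by
        by_cases hpar : par (k+1) = c
        · obtain ⟨e, heP, hev⟩ := G.match_exists hP hvB
          rcases G.incB (hP.1 heP) hev with rfl | rfl | ⟨hg1, hg2, rfl⟩ | ⟨hg1, hg2, rfl⟩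
          · exfalso
            have h1 := IHk.1.mp heP
            rw [h1.2] at hrel1
            rw [hpar] at hrel1
            cases c <;> simp at hrel1
          · exact absurd (G.east_interior hkn hd) (hnotint _ heP)
          · simp [heP, hsb, hpar]
          · exfalso
            have h1 := (IH (k-1) (by omega) (by omega)).2.2.2.mp heP
            have h2 : par (k-1) = par (k+1) := par_eq (by omega)
            rw [h1.2] at h2
            rw [hpar] at h2
            cases c <;> simp at h2
        · have hS1 : south (G.pos (k+1)) ∉ P := by
            intro hmem
            rcases Nat.eq_zero_or_pos k with hk0 | hk1
            · subst hk0
              have hc1 : c = false := by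
                have := bool_resolve' hpar
                simpa [par] using this.symm
              have hcS0 : south (G.pos 0) ∈ P := by
                apply (IH 0 (by omega) (by omega)).1.mpr
                exact ⟨Or.inl rfl, by simp [par, hc1]⟩
              have hmS0 : ((G.pos 0).1 + 1, (G.pos 0).2) ∈ ends (south (G.pos 0)) := by
                rw [ends_south]; simp
              have heq := G.match_unique hP hvB hmem hcS0 hmS1 hmS0
              simp only [south, Prod.mk.injEq] at heq
              exact G.pos_ne (show 0+1 ≠ 0 by omega) heq.1
            · by_cases hd1 : G.dir (k-1) = false
              · have hSk : south (G.pos k) ∈ P := by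
                  apply IHk.1.mpr
                  refine ⟨Or.inr hd1, ?_⟩
                  have h1 : par k = !par (k+1) := bool_not_swap hrel1
                  rw [h1, bool_resolve' hpar, Bool.not_not]
                have hmSk : ((G.pos k).1 + 1, (G.pos k).2) ∈ ends (south (G.pos k)) := by
                  rw [ends_south]; simp
                have heq := G.match_unique hP hvB hmem hSk hmS1 hmSk
                simp only [south, Prod.mk.injEq] at heq
                exact G.pos_ne (show k+1 ≠ k by omega) heq.1
              · have hd1t : G.dir (k-1) = true := by
                  rcases Bool.eq_false_or_eq_true (G.dir (k-1)) with h | h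
                  · exact h
                  · exact absurd h hd1
                have hEk1 : east (G.pos (k-1)) ∈ P := by
                  apply (IH (k-1) (by omega) (by omega)).2.2.2.mpr
                  refine ⟨Or.inr hd1t, ?_⟩
                  have hx := bool_resolve' hpar
                  have h2 : par (k-1) = par (k+1) := par_eq (by omega)
                  rw [hx] at h2; exact h2
                have hpk : G.pos k = ((G.pos (k-1)).1, (G.pos (k-1)).2 + 1) := by
                  conv_lhs => rw [show k = (k-1)+1 by omega]
                  exact G.pos_succ_true hd1t
                have hmEk1 : ((G.pos k).1 + 1, (G.pos k).2) ∈ ends (east (G.pos (k-1))) := by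
                  rw [ends_east, hpk]; simp
                have heq := G.match_unique hP hvB hmem hEk1 hmS1 hmEk1
                simp [south, east] at heq
          simp [hS1, hpar]
      -- east edge of tile k+1, determined at corner B of tile k+1
      have hE : east (G.pos (k+1)) ∈ P ↔ (G.Eb (k+1) ∧ par (k+1) = !c) := by
        by_cases heb : G.Eb (k+1)
        · have hvB1 : ((G.pos (k+1)).1 + 1, (G.pos (k+1)).2) ∈ G.vertices := G.cornerB_mem hi
          have hmE : ((G.pos (k+1)).1 + 1, (G.pos (k+1)).2) ∈ ends (east (G.pos (k+1))) := by
            rw [ends_east]; simp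
          by_cases hpar : par (k+1) = !c
          · obtain ⟨e, heP, hev⟩ := G.match_exists hP hvB1
            rcases G.incB (hP.1 heP) hev with rfl | rfl | ⟨hg1, hg2, rfl⟩ | ⟨hg1, hg2, rfl⟩
            · exfalso
              have h1 := hS.mp heP
              exact bool_contra h1.2 hpar
            · simp [heP, heb, hpar]
            · exfalso
              rcases heb with h | h
              · omega
              · rw [h] at hg2; simp at hg2
            · exfalso
              rw [Nat.add_sub_cancel, hd] at hg2; simp at hg2
          · have hSk1 : south (G.pos (k+1)) ∈ P := hS.mpr ⟨hsb, bool_resolve hpar⟩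
            have hmSk1 : ((G.pos (k+1)).1 + 1, (G.pos (k+1)).2) ∈ ends (south (G.pos (k+1))) := by
              rw [ends_south]; simp
            have hE1 : east (G.pos (k+1)) ∉ P := by
              intro hmem
              have heq := G.match_unique hP hvB1 hmem hSk1 hmE hmSk1
              simp [south, east] at heq
            simp [hE1, hpar]
        · have hd1 : G.dir (k+1) = false := by
            rcases Bool.eq_false_or_eq_true (G.dir (k+1)) with h | h
            · exact absurd (Or.inr h : G.Eb (k+1)) heb
            · exact h
          have hn1 : k+1 < G.n := by
            rcases Nat.lt_or_ge (k+1) G.n with h | h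
            · exact h
            · exact absurd (Or.inl (by omega) : G.Eb (k+1)) heb
          have hint : east (G.pos (k+1)) ∈ G.interiorEdges := G.east_interior hn1 hd1
          constructor
          · intro h; exact absurd hint (hnotint _ h)
          · rintro ⟨h, -⟩; exact absurd h heb
      -- north edge of tile k+1, determined at corner C of tile k+1
      have hN : north (G.pos (k+1)) ∈ P ↔ (G.Nb (k+1) ∧ par (k+1) = c) := by
        by_cases hnb : G.Nb (k+1)
        · have hvC1 : ((G.pos (k+1)).1, (G.pos (k+1)).2 + 1) ∈ G.vertices := G.cornerC_mem hi
          have hmN : ((G.pos (k+1)).1, (G.pos (k+1)).2 + 1) ∈ ends (north (G.pos (k+1))) := by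
            rw [ends_north]; simp
          by_cases hpar : par (k+1) = c
          · obtain ⟨e, heP, hev⟩ := G.match_exists hP hvC1
            rcases G.incC (hP.1 heP) hev with rfl | rfl | ⟨hg1, hg2, rfl⟩ | ⟨hg1, hg2, rfl⟩
            · simp [heP, hnb, hpar]
            · exact absurd hWint (hnotint _ heP)
            · exfalso
              rcases hnb with h | h
              · omega
              · rw [h] at hg2; simp at hg2
            · exfalso
              rw [Nat.add_sub_cancel] at heP
              have h1 := IHk.2.2.1.mp heP
              rw [h1.2] at hrel1
              rw [hpar] at hrel1
              cases c <;> simp at hrel1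
          · have hNk : north (G.pos k) ∈ P := by
              apply IHk.2.2.1.mpr
              refine ⟨Or.inr hd, ?_⟩
              have h1 : par k = !par (k+1) := bool_not_swap hrel1
              rw [h1, bool_resolve' hpar, Bool.not_not]
            have hmNk : ((G.pos (k+1)).1, (G.pos (k+1)).2 + 1) ∈ ends (north (G.pos k)) := by
              rw [ends_north, G.pos_succ_false hd]; simp
            have hN1 : north (G.pos (k+1)) ∉ P := by
              intro hmem
              have heq := G.match_unique hP hvC1 hmem hNk hmN hmNk
              simp only [north, Prod.mk.injEq] at heq
              obtain ⟨⟨t1, t2⟩, -⟩ := heq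
              have s1 := G.pos_sum (k+1)
              have s2 := G.pos_sum k
              omega
            simp [hN1, hpar]
        · have hd1 : G.dir (k+1) = true := by
            rcases Bool.eq_false_or_eq_true (G.dir (k+1)) with h | h
            · exact h
            · exact absurd (Or.inr h : G.Nb (k+1)) hnb
          have hn1 : k+1 < G.n := by
            rcases Nat.lt_or_ge (k+1) G.n with h | h
            · exact h
            · exact absurd (Or.inl (by omega) : G.Nb (k+1)) hnb
          have hint : north (G.pos (k+1)) ∈ G.interiorEdges := G.north_interior hn1 hd1
          constructor
          · intro h; exact absurd hint (hnotint _ h)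
          · rintro ⟨h, -⟩; exact absurd h hnb
      exact ⟨hS, hW, hN, hE⟩

end SnakeGraph

namespace SnakeGraph

lemma bool_not_cancel {x y : Bool} (h : !x = !y) : x = y := by
  cases x <;> cases y <;> simp_all

lemma bool_xor_cancel_not {w x y z : Bool} (h : xor w x = xor y z) : (w = !y ↔ x = !z) := by
  cases w <;> cases x <;> cases y <;> cases z <;> simp_all

variable (G : SnakeGraph)

lemma f_cmp_not {f : Edge → Bool} (hf : G.IsSignFunction f) {b a : Edge}
    (hb : b ∈ G.edges) (ha : a ∈ G.edges) :
    (f b = !f a ↔ canonSign b = !canonSign a) := by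
  have h1 := G.f_vs_canon hf b hb
  have h2 := G.f_vs_canon hf a ha
  exact bool_xor_cancel_not (h1.trans h2.symm)

lemma Sb_of_boundary {i : ℕ} (hi : i ≤ G.n) (hint : south (G.pos i) ∉ G.interiorEdges) :
    G.Sb i := by
  by_contra h
  unfold Sb at h
  push_neg at h
  have hd : G.dir (i-1) = true := by
    rcases Bool.eq_false_or_eq_true (G.dir (i-1)) with hx | hx
    · exact hx
    · exact absurd hx h.2
  apply hint
  have he : south (G.pos i) = north (G.pos (i-1)) := by
    conv_lhs => rw [show i = (i-1)+1 by omega]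
    exact G.south_succ_eq hd
  rw [he]
  exact G.north_interior (by omega) hd

lemma Wb_of_boundary {i : ℕ} (hi : i ≤ G.n) (hint : west (G.pos i) ∉ G.interiorEdges) :
    G.Wb i := by
  by_contra h
  unfold Wb at h
  push_neg at h
  have hd : G.dir (i-1) = false := by
    rcases Bool.eq_false_or_eq_true (G.dir (i-1)) with hx | hx
    · exact absurd hx h.2
    · exact hx
  apply hint
  have he : west (G.pos i) = east (G.pos (i-1)) := by
    conv_lhs => rw [show i = (i-1)+1 by omega]
    exact G.west_succ_eq hd
  rw [he]
  exact G.east_interior (by omega) hd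

lemma Nb_of_boundary {i : ℕ} (hi : i ≤ G.n) (hint : north (G.pos i) ∉ G.interiorEdges) :
    G.Nb i := by
  by_contra h
  unfold Nb at h
  push_neg at h
  have hd : G.dir i = true := by
    rcases Bool.eq_false_or_eq_true (G.dir i) with hx | hx
    · exact hx
    · exact absurd hx h.2
  exact hint (G.north_interior (by omega) hd)

lemma Eb_of_boundary {i : ℕ} (hi : i ≤ G.n) (hint : east (G.pos i) ∉ G.interiorEdges) :
    G.Eb i := by
  by_contra h
  unfold Eb at h
  push_neg at h
  have hd : G.dir i = false := by
    rcases Bool.eq_false_or_eq_true (G.dir i) with hx | hx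
    · exact absurd hx h.2
    · exact hx
  exact hint (G.east_interior (by omega) hd)

end SnakeGraph

open SnakeGraph in
theorem boundary_matching_determined' (G : SnakeGraph) (f : Edge → Bool)
    (hf : G.IsSignFunction f) (P : Finset Edge)
    (hP : G.IsPerfectMatching P) (hbd : ∀ e ∈ P, G.IsBoundaryEdge e)
    (a : Edge) (ha : G.IsBoundaryEdge a)
    (hcase : (G.IsNE a ∧ a ∈ P) ∨ (G.IsSW a ∧ a ∉ P)) :
    ∀ b : Edge, b ∈ P ↔
      G.IsBoundaryEdge b ∧
        ((G.IsNE b ∧ f b = f a) ∨ (G.IsSW b ∧ f b = ! f a)) := by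
  classical
  obtain ⟨c, hc⟩ : ∃ c : Bool, (west (G.pos 0) ∈ P ↔ c = true) := by
    by_cases hw : west (G.pos 0) ∈ P
    · exact ⟨true, by simp [hw]⟩
    · exact ⟨false, by simp [hw]⟩
  have hmain := G.main hP hbd c hc
  have haE : a ∈ G.edges := ha.1
  have hca : canonSign a = c := by
    rcases hcase with ⟨⟨i, hi, hrole⟩, haP⟩ | ⟨⟨i, hi, hrole⟩, haP⟩
    · rcases hrole with rfl | rfl
      · have h1 := (hmain i hi).2.2.1.mp haP
        rw [G.cs_north, h1.2]
      · have h1 := (hmain i hi).2.2.2.mp haP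
        rw [G.cs_east, h1.2, Bool.not_not]
    · rcases hrole with rfl | rfl
      · have hsb : G.Sb i := G.Sb_of_boundary hi ha.2
        have hp : ¬ (par i = c) := fun hp => haP ((hmain i hi).1.mpr ⟨hsb, hp⟩)
        rw [G.cs_south, bool_resolve' hp, Bool.not_not]
      · have hwb : G.Wb i := G.Wb_of_boundary hi ha.2
        have hp : ¬ (par i = !c) := fun hp => haP ((hmain i hi).2.1.mpr ⟨hwb, hp⟩)
        rw [G.cs_west, bool_resolve hp]
  intro b
  constructor
  · intro hbP
    have hbbd := hbd b hbP
    refine ⟨hbbd, ?_⟩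
    obtain ⟨i, hi, hrole⟩ := G.mem_edges.mp (hP.1 hbP)
    have hfc := G.f_cmp hf hbbd.1 haE
    have hfc' := G.f_cmp_not hf hbbd.1 haE
    rcases hrole with rfl | rfl | rfl | rfl
    · right
      refine ⟨⟨i, hi, Or.inl rfl⟩, ?_⟩
      have h1 := (hmain i hi).1.mp hbP
      rw [hfc', G.cs_south, h1.2, hca]
    · left
      refine ⟨⟨i, hi, Or.inl rfl⟩, ?_⟩
      have h1 := (hmain i hi).2.2.1.mp hbP
      rw [hfc, G.cs_north, h1.2, hca]
    · right
      refine ⟨⟨i, hi, Or.inr rfl⟩, ?_⟩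
      have h1 := (hmain i hi).2.1.mp hbP
      rw [hfc', G.cs_west, h1.2, hca]
    · left
      refine ⟨⟨i, hi, Or.inr rfl⟩, ?_⟩
      have h1 := (hmain i hi).2.2.2.mp hbP
      rw [hfc, G.cs_east, h1.2, hca, Bool.not_not]
  · rintro ⟨hbbd, hcasb⟩
    have hbe := hbbd.1
    have hfc := G.f_cmp hf hbe haE
    have hfc' := G.f_cmp_not hf hbe haE
    rcases hcasb with ⟨⟨i, hi, hrole⟩, hfb⟩ | ⟨⟨i, hi, hrole⟩, hfb⟩
    · have hcs : canonSign b = c := by rw [← hca]; exact hfc.mp hfb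
      rcases hrole with rfl | rfl
      · apply (hmain i hi).2.2.1.mpr
        refine ⟨G.Nb_of_boundary hi hbbd.2, ?_⟩
        rw [G.cs_north] at hcs; exact hcs
      · apply (hmain i hi).2.2.2.mpr
        refine ⟨G.Eb_of_boundary hi hbbd.2, ?_⟩
        rw [G.cs_east] at hcs
        rw [← hcs, Bool.not_not]
    · have hcs : canonSign b = !c := by rw [← hca]; exact hfc'.mp hfb
      rcases hrole with rfl | rfl
      · apply (hmain i hi).1.mpr
        refine ⟨G.Sb_of_boundary hi hbbd.2, ?_⟩
        rw [G.cs_south] at hcs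
        have : par i = c := by
          rcases Bool.eq_false_or_eq_true (par i) with hx | hx <;>
            rcases Bool.eq_false_or_eq_true c with hy | hy <;>
              rw [hx, hy] at hcs ⊢ <;> simp_all
        exact this
      · apply (hmain i hi).2.1.mpr
        refine ⟨G.Wb_of_boundary hi hbbd.2, ?_⟩
        rw [G.cs_west] at hcs; exact hcs


/-- Lemma on signs of boundary matchings, parts (3) and (4).
Let `G` be a snake graph with sign function `f` and let `P` be a perfect matching of `G`
consisting of boundary edges only.  If `a` is a north-or-east boundary edge lying in `P`
(or a south-or-west boundary edge not lying in `P`), then `P` consists precisely of all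
north-or-east boundary edges `b` with `f b = f a` together with all south-or-west boundary
edges `b` with `f b = ! f a`. -/
theorem boundary_matching_determined (G : SnakeGraph) (f : Edge → Bool)
    (hf : G.IsSignFunction f) (P : Finset Edge)
    (hP : G.IsPerfectMatching P) (hbd : ∀ e ∈ P, G.IsBoundaryEdge e)
    (a : Edge) (ha : G.IsBoundaryEdge a)
    (hcase : (G.IsNE a ∧ a ∈ P) ∨ (G.IsSW a ∧ a ∉ P)) :
    ∀ b : Edge, b ∈ P ↔
      G.IsBoundaryEdge b ∧
        ((G.IsNE b ∧ f b = f a) ∨ (G.IsSW b ∧ f b = ! f a)) := by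
  exact boundary_matching_determined' G f hf P hP hbd a ha hcase

end SnakeCalc
end
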